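/- arXiv:1405.4851 — 10 statements merged into one kernel-verified Lean document; each statement's English description precedes it below -/
import Mathlib

section
/- Let G be a compactly generated totally disconnected locally compact group with compact generating set X, and let U be a compact open subgroup of G. Then there exists a finite symmetric set A ⊆ G containing 1 such that X ⊆ AU and UAU = AU. Moreover, for any finite symmetric set A containing 1 with X ⊆ AU and UAU = AU, one has G = ⟨A⟩U. -/
open Pointwise

private lemma coe_mul_coe' {G : Type*} [Group G] (U : Subgroup G) :
    (U : Set G) * (U : Set G) = (U : Set G) := by
  apply Set.Subset.antisymm
  · rintro x ⟨a, ha, b, hb, rfl⟩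
    exact U.mul_mem ha hb
  · intro x hx
    exact ⟨x, hx, 1, U.one_mem, mul_one x⟩

/-- For a compactly generated t.d.l.c. group `G` with compact generating set `X` and a
compact open subgroup `U`, there is a finite symmetric set `A ∋ 1` with `X ⊆ AU` and
`UAU = AU`; moreover any such `A` satisfies `G = ⟨A⟩U`. -/
theorem factor_lemma (G : Type*) [Group G] [TopologicalSpace G] [IsTopologicalGroup G]
    [LocallyCompactSpace G] [TotallyDisconnectedSpace G]
    (X : Set G) (hXc : IsCompact X) (hXgen : Subgroup.closure X = ⊤)
    (U : Subgroup G) (hUc : IsCompact (U : Set G)) (hUo : IsOpen (U : Set G)) :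
    (∃ A : Set G, A.Finite ∧ A⁻¹ = A ∧ (1 : G) ∈ A ∧
        X ⊆ A * (U : Set G) ∧ (U : Set G) * A * (U : Set G) = A * (U : Set G)) ∧
    (∀ A : Set G, A.Finite → A⁻¹ = A → (1 : G) ∈ A →
        X ⊆ A * (U : Set G) → (U : Set G) * A * (U : Set G) = A * (U : Set G) →
        ((Subgroup.closure A : Set G)) * (U : Set G) = Set.univ) := by
  constructor
  · -- Existence part
    have hUU : (U : Set G) * (U : Set G) = (U : Set G) := coe_mul_coe' U
    have h3 : ∀ s : Set G, (U : Set G) * ((U : Set G) * s) = (U : Set G) * s :=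
      fun s => by rw [← mul_assoc, hUU]
    set S : Set G := (U : Set G) * X * U ∪ (U : Set G) * X⁻¹ * U ∪ (U : Set G) with hS
    have hScomp : IsCompact S :=
      (((hUc.mul hXc).mul hUc).union ((hUc.mul hXc.inv).mul hUc)).union hUc
    have hSU : S * (U : Set G) = S := by
      simp only [hS, Set.union_mul, mul_assoc, hUU]
    have hUS : (U : Set G) * S = S := by
      simp only [hS, Set.mul_union, mul_assoc, hUU, h3]
    have hSinv : S⁻¹ = S := by
      simp only [hS, Set.union_inv, mul_inv_rev, inv_coe_set, inv_inv, mul_assoc]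
      rw [Set.union_comm ((U : Set G) * (X⁻¹ * (U : Set G)))]
    -- cover S by finitely many cosets
    have hcover : S ⊆ ⋃ s ∈ S, s • (U : Set G) := by
      intro x hx
      exact Set.mem_biUnion hx ⟨1, U.one_mem, mul_one x⟩
    obtain ⟨t, hts, htfin, htcov⟩ :=
      hScomp.elim_finite_subcover_image (fun s _ => hUo.smul s) hcover
    set A : Set G := t ∪ t⁻¹ ∪ {1} with hA
    have hAfin : A.Finite := (htfin.union htfin.inv).union (Set.finite_singleton 1)
    have hAinv : A⁻¹ = A := by
      rw [hA, Set.union_inv, Set.union_inv, inv_inv, Set.inv_singleton, inv_one,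
        Set.union_comm t⁻¹ t]
    have hAS : A ⊆ S := by
      rw [hA]
      apply Set.union_subset (Set.union_subset hts _)
      · rw [Set.singleton_subset_iff]
        exact Set.mem_union_right _ U.one_mem
      · intro x hx
        rw [← hSinv, Set.mem_inv]
        exact hts (Set.mem_inv.mp hx)
    have hAU : A * (U : Set G) = S := by
      apply Set.Subset.antisymm
      · calc A * (U : Set G) ⊆ S * U := Set.mul_subset_mul_right hAS
          _ = S := hSU
      · intro x hx
        obtain ⟨s, hst, hxs⟩ := Set.mem_iUnion₂.mp (htcov hx)
        obtain ⟨u, hu, rfl⟩ := hxs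
        exact ⟨s, Set.mem_union_left _ (Set.mem_union_left _ hst), u, hu, rfl⟩
    refine ⟨A, hAfin, hAinv, Set.mem_union_right _ rfl, ?_, ?_⟩
    · intro x hx
      rw [hAU, hS]
      exact Set.mem_union_left _ (Set.mem_union_left _
        ⟨1 * x, ⟨1, U.one_mem, x, hx, rfl⟩, 1, U.one_mem, by group⟩)
    · rw [mul_assoc, hAU, hUS, ← hAU]
  · -- Moreover part
    intro A _ hAinv h1A hXA hUAU
    set C : Set G := (Subgroup.closure A : Set G) with hC
    have hAC : A ⊆ C := Subgroup.subset_closure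
    have hACU : A * (U : Set G) ⊆ C * U := Set.mul_subset_mul_right hAC
    have hUA : ∀ u ∈ U, ∀ a ∈ A, u * a ∈ A * (U : Set G) := by
      intro u hu a ha
      rw [← hUAU]
      exact ⟨u * a, ⟨u, hu, a, ha, rfl⟩, 1, U.one_mem, mul_one _⟩
    -- key: U * closure A ⊆ closure A * U
    have key : ∀ g ∈ Subgroup.closure A, ∀ u ∈ U,
        u * g ∈ C * (U : Set G) ∧ u * g⁻¹ ∈ C * (U : Set G) := by
      intro g hg
      induction hg using Subgroup.closure_induction with
      | mem x hx =>
        intro u hu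
        have hx' : x⁻¹ ∈ A := by rw [← hAinv]; exact Set.inv_mem_inv.mpr hx
        exact ⟨hACU (hUA u hu x hx), hACU (hUA u hu x⁻¹ hx')⟩
      | one =>
        intro u hu
        constructor <;>
          · simp only [inv_one, mul_one]
            exact ⟨1, (Subgroup.closure A).one_mem, u, hu, one_mul u⟩
      | mul x y hx hy ihx ihy =>
        intro u hu
        constructor
        · obtain ⟨c, hc, v, hv, hcv⟩ := (ihx u hu).1
          have hcv' : c * v = u * x := hcv
          obtain ⟨c', hc', w, hw, hc'w⟩ := (ihy v hv).1
          have hc'w' : c' * w = v * y := hc'w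
          refine ⟨c * c', mul_mem hc hc', w, hw, ?_⟩
          show c * c' * w = u * (x * y)
          rw [mul_assoc, hc'w', ← mul_assoc, hcv', mul_assoc]
        · obtain ⟨c, hc, v, hv, hcv⟩ := (ihy u hu).2
          have hcv' : c * v = u * y⁻¹ := hcv
          obtain ⟨c', hc', w, hw, hc'w⟩ := (ihx v hv).2
          have hc'w' : c' * w = v * x⁻¹ := hc'w
          refine ⟨c * c', mul_mem hc hc', w, hw, ?_⟩
          show c * c' * w = u * (x * y)⁻¹
          rw [mul_inv_rev, mul_assoc, hc'w', ← mul_assoc, hcv', mul_assoc]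
      | inv x hx ihx =>
        intro u hu
        refine ⟨(ihx u hu).2, ?_⟩
        rw [inv_inv]
        exact (ihx u hu).1
    -- C * U is a subgroup
    have hone : (1 : G) ∈ C * (U : Set G) :=
      ⟨1, (Subgroup.closure A).one_mem, 1, U.one_mem, mul_one 1⟩
    have hmul : ∀ x ∈ C * (U : Set G), ∀ y ∈ C * (U : Set G),
        x * y ∈ C * (U : Set G) := by
      rintro _ ⟨c, hc, u, hu, rfl⟩ _ ⟨c', hc', u', hu', rfl⟩
      obtain ⟨d, hd, v, hv, hdv⟩ := (key c' hc' u hu).1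
      have hdv' : d * v = u * c' := hdv
      refine ⟨c * d, mul_mem hc hd, v * u', U.mul_mem hv hu', ?_⟩
      show c * d * (v * u') = c * u * (c' * u')
      rw [mul_assoc c d, ← mul_assoc d, hdv', mul_assoc, mul_assoc, ← mul_assoc u]
    have hinv : ∀ x ∈ C * (U : Set G), x⁻¹ ∈ C * (U : Set G) := by
      rintro _ ⟨c, hc, u, hu, rfl⟩
      rw [mul_inv_rev]
      exact (key c hc u⁻¹ (U.inv_mem hu)).2
    let K : Subgroup G :=
      { carrier := C * (U : Set G)
        one_mem' := hone
        mul_mem' := fun ha hb => hmul _ ha _ hb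
        inv_mem' := fun ha => hinv _ ha }
    have hXK : X ⊆ (K : Set G) := fun x hx => hACU (hXA hx)
    have hle : Subgroup.closure X ≤ K := (Subgroup.closure_le K).mpr hXK
    rw [hXgen] at hle
    apply Set.eq_univ_of_univ_subset
    intro g _
    exact hle (Subgroup.mem_top g)
end

section
/- Let G be a group and 𝒜 a collection of closed subgroups of a topological group G that is conjugation invariant (gCg⁻¹ ∈ 𝒜 for all C ∈ 𝒜, g ∈ G) and hereditary (every closed subgroup of a member of 𝒜 is in 𝒜). Define N_𝒜 to be the set of g ∈ G such that for every C ∈ 𝒜, the closed subgroup topologically generated by g and C belongs to 𝒜. Then N_𝒜 is a normal subgroup of G. -/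
/-- If `𝒜` is a conjugation-invariant and hereditary collection of closed subgroups of a
topological group `G`, then the `𝒜`-core `N_𝒜` (the set of `g` such that for every
`C ∈ 𝒜` the closed subgroup topologically generated by `g` and `C` lies in `𝒜`) is a
normal subgroup of `G`. -/
theorem core_is_normal_subgroup (G : Type*) [Group G] [TopologicalSpace G]
    [IsTopologicalGroup G] (𝒜 : Set (Subgroup G))
    (hclosed : ∀ C ∈ 𝒜, IsClosed (C : Set G))
    (hconj : ∀ C ∈ 𝒜, ∀ g : G, C.map (MulAut.conj g).toMonoidHom ∈ 𝒜)
    (hher : ∀ C ∈ 𝒜, ∀ D : Subgroup G, IsClosed (D : Set G) → D ≤ C → D ∈ 𝒜) :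
    ∃ N : Subgroup G, N.Normal ∧
      (N : Set G) =
        {g : G | ∀ C ∈ 𝒜, (Subgroup.closure ({g} ∪ (C : Set G))).topologicalClosure ∈ 𝒜} := by
  -- membership facts about the generated closed subgroup
  have memg : ∀ (g : G) (C : Subgroup G),
      g ∈ (Subgroup.closure ({g} ∪ (C : Set G))).topologicalClosure := by
    intro g C
    exact (Subgroup.le_topologicalClosure _)
      (Subgroup.subset_closure (Set.mem_union_left _ rfl))
  have memC : ∀ (g : G) (C : Subgroup G),
      C ≤ (Subgroup.closure ({g} ∪ (C : Set G))).topologicalClosure := by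
    intro g C c hc
    exact (Subgroup.le_topologicalClosure _)
      (Subgroup.subset_closure (Set.mem_union_right _ hc))
  -- key lemma: if g ∈ E, C ≤ E, E ∈ 𝒜, then the closed subgroup generated by g and C is in 𝒜
  have key : ∀ E ∈ 𝒜, ∀ (g : G) (C : Subgroup G), g ∈ E → C ≤ E →
      (Subgroup.closure ({g} ∪ (C : Set G))).topologicalClosure ∈ 𝒜 := by
    intro E hE g C hg hC
    refine hher E hE _ (Subgroup.isClosed_topologicalClosure _) ?_
    refine Subgroup.topologicalClosure_minimal _ ?_ (hclosed E hE)
    rw [Subgroup.closure_le]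
    rintro x (rfl | hx)
    · exact hg
    · exact hC hx
  have Sdef : Set G := {g : G | ∀ C ∈ 𝒜,
      (Subgroup.closure ({g} ∪ (C : Set G))).topologicalClosure ∈ 𝒜}
  refine ⟨⟨⟨⟨{g : G | ∀ C ∈ 𝒜,
      (Subgroup.closure ({g} ∪ (C : Set G))).topologicalClosure ∈ 𝒜}, ?_⟩, ?_⟩, ?_⟩, ?_, rfl⟩
  · rintro g h hg hh C hC
    have hD := hh C hC
    have hE := hg _ hD
    refine key _ hE (g * h) C ?_ ?_
    · exact mul_mem (memg g _) (memC g _ (memg h C))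
    · exact le_trans (memC h C) (memC g _)
  · intro C hC
    exact key C hC 1 C (one_mem C) le_rfl
  · intro g hg C hC
    have hD := hg C hC
    exact key _ hD g⁻¹ C (inv_mem (memg g C)) (memC g C)
  · constructor
    intro g hg x C hC
    have hC' := hconj C hC x⁻¹
    have hD := hg _ hC'
    have hE := hconj _ hD x
    refine key _ hE (x * g * x⁻¹) C ?_ ?_
    · exact ⟨g, memg g _, rfl⟩
    · intro c hc
      refine ⟨x⁻¹ * c * x, memC g _ ⟨c, hc, by simp [MulAut.conj_apply]⟩, by simp [MulAut.conj_apply]; group⟩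
end

section
/- Let G be a totally disconnected locally compact second countable group and define SIN(G) as the set of g ∈ G such that for every C in the SIN-family and every compact open subgroup V of G there is an open subgroup W of V normalized by the closed subgroup generated by g and C (i.e., ⟨g,C⟩-bar lies in the SIN-family). Then SIN(G) is a closed subgroup of G. -/
open Pointwise


/-- The SIN-family of a topological group: closed subgroups `C` such that every compact
open subgroup `V` contains an open subgroup `W` normalized by `C`. -/
def SINFamily (G : Type*) [Group G] [TopologicalSpace G] : Set (Subgroup G) :=
  {C : Subgroup G | IsClosed (C : Set G) ∧
    ∀ V : Subgroup G, IsCompact (V : Set G) → IsOpen (V : Set G) →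
      ∃ W : Subgroup G, IsOpen (W : Set G) ∧ W ≤ V ∧ C ≤ Subgroup.normalizer (W : Set G)}

/-- The SIN-core of `G`: elements `g` such that for every `C` in the SIN-family, the
closure of `⟨g, C⟩` again belongs to the SIN-family. -/
def SINCore (G : Type*) [Group G] [TopologicalSpace G] [IsTopologicalGroup G] : Set G :=
  {g : G | ∀ C ∈ SINFamily G,
    (Subgroup.closure ({g} ∪ (C : Set G))).topologicalClosure ∈ SINFamily G}

section Aux

variable {G : Type*} [Group G] [TopologicalSpace G] [IsTopologicalGroup G]

/-- The core `⋂_{x ∈ W₀} x W₁ x⁻¹` of an open subgroup `W₁` with respect to a compact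
subgroup `W₀` is an open subgroup of `W₁`, normalized by `W₀` and by every element
normalizing both `W₀` and `W₁`. -/
theorem exists_core (W₀ W₁ : Subgroup G) (hc : IsCompact (W₀ : Set G))
    (ho : IsOpen (W₁ : Set G)) :
    ∃ K : Subgroup G, IsOpen (K : Set G) ∧ K ≤ W₁ ∧ W₀ ≤ Subgroup.normalizer (K : Set G) ∧
      ∀ c : G, c ∈ Subgroup.normalizer (W₀ : Set G) → c ∈ Subgroup.normalizer (W₁ : Set G) → c ∈ Subgroup.normalizer (K : Set G) := by
  set K : Subgroup G := ⨅ x : (W₀ : Set G), W₁.map (MulAut.conj (x : G)).toMonoidHom with hK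
  have memK : ∀ k : G, k ∈ K ↔ ∀ x ∈ W₀, x⁻¹ * k * x ∈ W₁ := by
    intro k
    simp only [hK, Subgroup.mem_iInf, Subgroup.mem_map_equiv, MulAut.conj_symm_apply]
    exact ⟨fun h x hx => h ⟨x, hx⟩, fun h x => h x x.2⟩
  refine ⟨K, ?_, ?_, ?_, ?_⟩
  · -- openness via a finite subcover of `W₀` by cosets of `W₁`
    obtain ⟨t, ht⟩ := IsCompact.elim_finite_subcover hc
      (fun x : (W₀ : Set G) => (x : G) • (W₁ : Set G))
      (fun x => ho.smul _)
      (by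
        intro y hy
        exact Set.mem_iUnion.2 ⟨⟨y, hy⟩, ⟨1, W₁.one_mem, by simp⟩⟩)
    have hKset : (K : Set G) = ⋂ x ∈ t, (fun y => (x : G)⁻¹ * y * (x : G)) ⁻¹' (W₁ : Set G) := by
      ext k
      simp only [Set.mem_iInter, Set.mem_preimage, SetLike.mem_coe]
      constructor
      · intro hk x _
        exact (memK k).1 hk x x.2
      · intro hk
        rw [memK]
        intro x hx
        obtain ⟨z, hzt, hz⟩ := Set.mem_iUnion₂.1 (ht hx)
        obtain ⟨w, hw, hwz⟩ := hz
        have hx' : x = (z : G) * w := hwz.symm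
        have h1 : (z : G)⁻¹ * k * (z : G) ∈ W₁ := hk z hzt
        have : x⁻¹ * k * x = w⁻¹ * ((z : G)⁻¹ * k * (z : G)) * w := by
          rw [hx']; group
        rw [this]
        exact W₁.mul_mem (W₁.mul_mem (W₁.inv_mem hw) h1) hw
    rw [hKset]
    exact isOpen_biInter_finset fun x _ => ho.preimage (by fun_prop)
  · intro k hk
    have := (memK k).1 hk 1 W₀.one_mem
    simpa using this
  · -- W₀ normalizes K
    intro w hw
    rw [Subgroup.mem_normalizer_iff]
    intro k
    constructor
    · intro hk
      rw [memK]
      intro x hx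
      have hx' : w⁻¹ * x ∈ W₀ := W₀.mul_mem (W₀.inv_mem hw) hx
      have h1 : (w⁻¹ * x)⁻¹ * k * (w⁻¹ * x) ∈ W₁ := (memK k).1 hk _ hx'
      have : x⁻¹ * (w * k * w⁻¹) * x = (w⁻¹ * x)⁻¹ * k * (w⁻¹ * x) := by group
      rw [this]; exact h1
    · intro hk
      rw [memK]
      intro x hx
      have hx' : w * x ∈ W₀ := W₀.mul_mem hw hx
      have h1 : (w * x)⁻¹ * (w * k * w⁻¹) * (w * x) ∈ W₁ := (memK _).1 hk _ hx'
      have : x⁻¹ * k * x = (w * x)⁻¹ * (w * k * w⁻¹) * (w * x) := by group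
      rw [this]; exact h1
  · -- anything normalizing both W₀ and W₁ normalizes K
    intro c hc0 hc1
    have hc0' := Subgroup.mem_normalizer_iff.1 hc0
    have hc1' := Subgroup.mem_normalizer_iff.1 hc1
    rw [Subgroup.mem_normalizer_iff]
    intro k
    constructor
    · intro hk
      rw [memK]
      intro x hx
      have hy : c⁻¹ * x * c ∈ W₀ := by
        have := (hc0' (c⁻¹ * x * c)).2
        apply this
        have : c * (c⁻¹ * x * c) * c⁻¹ = x := by group
        rw [this]; exact hx
      have h1 : (c⁻¹ * x * c)⁻¹ * k * (c⁻¹ * x * c) ∈ W₁ := (memK k).1 hk _ hy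
      have h2 : c * ((c⁻¹ * x * c)⁻¹ * k * (c⁻¹ * x * c)) * c⁻¹ ∈ W₁ := (hc1' _).1 h1
      have : x⁻¹ * (c * k * c⁻¹) * x = c * ((c⁻¹ * x * c)⁻¹ * k * (c⁻¹ * x * c)) * c⁻¹ := by
        group
      rw [this]; exact h2
    · intro hk
      rw [memK]
      intro x hx
      have hy : c * x * c⁻¹ ∈ W₀ := (hc0' x).1 hx
      have h1 : (c * x * c⁻¹)⁻¹ * (c * k * c⁻¹) * (c * x * c⁻¹) ∈ W₁ := (memK _).1 hk _ hy
      have := (hc1' (x⁻¹ * k * x)).2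
      apply this
      have h3 : c * (x⁻¹ * k * x) * c⁻¹ =
          (c * x * c⁻¹)⁻¹ * (c * k * c⁻¹) * (c * x * c⁻¹) := by group
      rw [h3]; exact h1

omit [IsTopologicalGroup G] in
/-- The SIN-family is downward closed on closed subgroups. -/
theorem sinFamily_mono {A B : Subgroup G} (hAB : A ≤ B) (hA : IsClosed (A : Set G))
    (hB : B ∈ SINFamily G) : A ∈ SINFamily G := by
  refine ⟨hA, fun V hVc hVo => ?_⟩
  obtain ⟨W, hWo, hWV, hBW⟩ := hB.2 V hVc hVo
  exact ⟨W, hWo, hWV, hAB.trans hBW⟩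

end Aux

/-- In a t.d.l.c.s.c. group the SIN-core is closed. -/
theorem sinCore_isClosed (G : Type*) [Group G] [TopologicalSpace G] [IsTopologicalGroup G]
    [LocallyCompactSpace G] [TotallyDisconnectedSpace G]
    [SecondCountableTopology G] :
    IsClosed (SINCore G) := by
  apply isClosed_of_closure_subset
  intro g hg
  intro C hC
  by_cases H : ∃ V : Subgroup G, IsCompact (V : Set G) ∧ IsOpen (V : Set G)
  · obtain ⟨V₀, hV₀c, hV₀o⟩ := H
    -- a compact open subgroup W₀ normalized by C
    obtain ⟨W₀, hW₀o, hW₀V, hCW₀⟩ := hC.2 V₀ hV₀c hV₀o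
    have hW₀closed : IsClosed (W₀ : Set G) := W₀.isClosed_of_isOpen hW₀o
    have hW₀c : IsCompact (W₀ : Set G) := hV₀c.of_isClosed_subset hW₀closed hW₀V
    -- pick h ∈ SINCore ∩ g W₀
    have hopen : IsOpen (g • (W₀ : Set G)) := hW₀o.smul g
    have hmem : g ∈ g • (W₀ : Set G) := ⟨1, W₀.one_mem, by simp⟩
    obtain ⟨h, hhW, hhS⟩ := (mem_closure_iff.1 hg) _ hopen hmem
    obtain ⟨w, hw, hwh⟩ := hhW
    -- h = g * w, so g = h * w⁻¹ with w ∈ W₀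
    have hgw : g = h * w⁻¹ := by simp only [← hwh, smul_eq_mul]; group
    -- E := closure of ⟨W₀ ∪ C⟩ belongs to the SIN-family
    set E : Subgroup G :=
      (Subgroup.closure ((W₀ : Set G) ∪ (C : Set G))).topologicalClosure with hE
    have hEfam : E ∈ SINFamily G := by
      refine ⟨Subgroup.isClosed_topologicalClosure _, fun V hVc hVo => ?_⟩
      obtain ⟨W₁, hW₁o, hW₁V, hCW₁⟩ := hC.2 V hVc hVo
      obtain ⟨K, hKo, hKW₁, hW₀K, hKnorm⟩ := exists_core W₀ W₁ hW₀c hW₁o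
      refine ⟨K, hKo, hKW₁.trans hW₁V, ?_⟩
      have hNopen : IsOpen (Subgroup.normalizer (K : Set G) : Set G) := Subgroup.isOpen_mono K.le_normalizer hKo
      have hNclosed : IsClosed (Subgroup.normalizer (K : Set G) : Set G) :=
        (Subgroup.normalizer (K : Set G)).isClosed_of_isOpen hNopen
      apply Subgroup.topologicalClosure_minimal _ _ hNclosed
      rw [Subgroup.closure_le]
      rintro y (hy | hy)
      · exact hW₀K hy
      · exact hKnorm y (hCW₀ hy) (hCW₁ hy)
    -- F := closure of ⟨h, E⟩ belongs to the SIN-family since h ∈ SINCore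
    set F : Subgroup G :=
      (Subgroup.closure ({h} ∪ (E : Set G))).topologicalClosure with hF
    have hFfam : F ∈ SINFamily G := hhS E hEfam
    have hFclosed : IsClosed (F : Set G) := Subgroup.isClosed_topologicalClosure _
    -- the target subgroup is a closed subgroup of F
    have hEF : E ≤ F :=
      le_trans (fun x hx => Subgroup.subset_closure (Or.inr hx))
        (Subgroup.le_topologicalClosure _)
    have hhF : h ∈ F :=
      Subgroup.le_topologicalClosure _ (Subgroup.subset_closure (Or.inl rfl))
    have hwE : w ∈ E :=
      Subgroup.le_topologicalClosure _ (Subgroup.subset_closure (Or.inl hw))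
    have hgF : g ∈ F := by
      rw [hgw]
      exact F.mul_mem hhF (F.inv_mem (hEF hwE))
    have hCE : C ≤ E :=
      le_trans (fun x hx => Subgroup.subset_closure (Or.inr hx))
        (Subgroup.le_topologicalClosure _)
    apply sinFamily_mono _ (Subgroup.isClosed_topologicalClosure _) hFfam
    apply Subgroup.topologicalClosure_minimal _ _ hFclosed
    rw [Subgroup.closure_le]
    rintro y (hy | hy)
    · rw [Set.mem_singleton_iff] at hy
      rw [hy]; exact hgF
    · exact hEF (hCE hy)
  · exact ⟨Subgroup.isClosed_topologicalClosure _,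
      fun V hVc hVo => absurd ⟨V, hVc, hVo⟩ H⟩
end

section
/- Let G be a totally disconnected locally compact second countable group. Then SIN(G) is an increasing union of compactly generated relatively open subgroups each of which is a SIN group (admits a basis at 1 of compact open normal subgroups). -/
open Set Pointwise

section Aux

variable {G : Type*} [Group G] [TopologicalSpace G] [IsTopologicalGroup G]

/-- Auxiliary predicate: a set `S` of elements such that every compact open subgroup contains
an open subgroup normalized by every element of `S`. -/
def SINfam (G : Type*) [Group G] [TopologicalSpace G] (S : Set G) : Prop :=
  ∀ V : Subgroup G, IsCompact (V : Set G) → IsOpen (V : Set G) →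
    ∃ W : Subgroup G, IsOpen (W : Set G) ∧ W ≤ V ∧ S ⊆ ((Subgroup.normalizer (W : Set G)) : Set G)

theorem sinfam_mono {S T : Set G} (h : S ⊆ T) (hT : SINfam G T) : SINfam G S := by
  intro V hVc hVo
  obtain ⟨W, h1, h2, h3⟩ := hT V hVc hVo
  exact ⟨W, h1, h2, h.trans h3⟩

theorem sinfam_empty : SINfam G (∅ : Set G) :=
  fun V _ hVo => ⟨V, hVo, le_rfl, empty_subset _⟩

theorem normalizer_isClosed_of_isOpen (W : Subgroup G) (h : IsOpen (W : Set G)) :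
    IsClosed ((Subgroup.normalizer (W : Set G)) : Set G) :=
  Subgroup.isClosed_of_isOpen _ (Subgroup.isOpen_mono Subgroup.le_normalizer h)

theorem sinfam_of_mem_SINFamily {C : Subgroup G} (hC : C ∈ SINFamily G) :
    SINfam G (C : Set G) := by
  intro V hVc hVo
  obtain ⟨W, h1, h2, h3⟩ := hC.2 V hVc hVo
  exact ⟨W, h1, h2, fun x hx => h3 hx⟩

theorem mem_SINFamily_of_sinfam {S : Set G} (h : SINfam G S) :
    (Subgroup.closure S).topologicalClosure ∈ SINFamily G := by
  refine ⟨Subgroup.isClosed_topologicalClosure _, fun V hVc hVo => ?_⟩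
  obtain ⟨W, h1, h2, h3⟩ := h V hVc hVo
  exact ⟨W, h1, h2, Subgroup.topologicalClosure_minimal _
    ((Subgroup.closure_le _).2 h3) (normalizer_isClosed_of_isOpen W h1)⟩

theorem mem_sinCore_iff (g : G) :
    g ∈ SINCore G ↔ ∀ S : Set G, SINfam G S → SINfam G ({g} ∪ S) := by
  constructor
  · intro hg S hS
    have h2 := hg _ (mem_SINFamily_of_sinfam hS)
    have h3 := sinfam_of_mem_SINFamily h2
    refine sinfam_mono ?_ h3
    intro x hx
    rcases hx with hx | hx
    · exact (Subgroup.le_topologicalClosure _)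
        (Subgroup.subset_closure (Or.inl hx))
    · exact (Subgroup.le_topologicalClosure _)
        (Subgroup.subset_closure (Or.inr
          ((Subgroup.le_topologicalClosure _) (Subgroup.subset_closure hx))))
  · intro h C hC
    exact mem_SINFamily_of_sinfam (h _ (sinfam_of_mem_SINFamily hC))

theorem sinfam_insert {g : G} {S : Set G} (hg : g ∈ SINCore G) (hS : SINfam G S) :
    SINfam G (insert g S) := by
  have := (mem_sinCore_iff g).1 hg S hS
  rwa [Set.singleton_union] at this

/-- helper: an element conjugating a subgroup into itself in both directions normalizes it. -/
theorem mem_normalizer_of_conj {Y : Subgroup G} {c : G}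
    (h1 : ∀ y ∈ Y, c * y * c⁻¹ ∈ Y) (h2 : ∀ y ∈ Y, c⁻¹ * y * c ∈ Y) :
    c ∈ (Subgroup.normalizer (Y : Set G)) := by
  refine Subgroup.mem_normalizer_iff.2 fun h => ⟨fun hy => h1 h hy, fun hy => ?_⟩
  have := h2 _ hy
  have e : c⁻¹ * (c * h * c⁻¹) * c = h := by group
  rwa [e] at this

/-- The engine: a normalized compact open subgroup may be adjoined to a SIN-family set. -/
theorem sinfam_union_subgroup {S : Set G} (hS : SINfam G S) (W : Subgroup G)
    (hWo : IsOpen (W : Set G)) (hWc : IsCompact (W : Set G))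
    (hSW : S ⊆ ((Subgroup.normalizer (W : Set G)) : Set G)) :
    SINfam G (S ∪ (W : Set G)) := by
  intro V hVc hVo
  have hWclosed : IsClosed (W : Set G) := Subgroup.isClosed_of_isOpen _ hWo
  have hVWc : IsCompact ((V ⊓ W : Subgroup G) : Set G) := by
    rw [Subgroup.coe_inf]; exact hVc.inter_right hWclosed
  have hVWo : IsOpen ((V ⊓ W : Subgroup G) : Set G) := by
    rw [Subgroup.coe_inf]; exact hVo.inter hWo
  obtain ⟨Z, hZo, hZle, hZn⟩ := hS (V ⊓ W) hVWc hVWo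
  -- the subgroup of elements whose every `W`-conjugate lies in `Z`
  set Y : Subgroup G :=
    { carrier := {g : G | ∀ x ∈ (W : Set G), x⁻¹ * g * x ∈ Z}
      one_mem' := by intro x _; simpa using Z.one_mem
      mul_mem' := by
        intro a b ha hb x hx
        have e : x⁻¹ * (a * b) * x = (x⁻¹ * a * x) * (x⁻¹ * b * x) := by group
        rw [e]; exact Z.mul_mem (ha x hx) (hb x hx)
      inv_mem' := by
        intro a ha x hx
        have e : x⁻¹ * a⁻¹ * x = (x⁻¹ * a * x)⁻¹ := by group
        rw [e]; exact Z.inv_mem (ha x hx) } with hYdef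
  have hYmem : ∀ g : G, g ∈ Y ↔ ∀ x ∈ (W : Set G), x⁻¹ * g * x ∈ Z := fun g => Iff.rfl
  -- `Y` is open, by the tube lemma
  have hYopen : IsOpen (Y : Set G) := by
    apply Subgroup.isOpen_of_mem_nhds (g := 1)
    have hcont : Continuous fun p : G × G => p.1⁻¹ * p.2 * p.1 := by continuity
    have hA : IsOpen ((fun p : G × G => p.1⁻¹ * p.2 * p.1) ⁻¹' (Z : Set G)) :=
      hZo.preimage hcont
    have hsub : (W : Set G) ×ˢ ({1} : Set G) ⊆
        (fun p : G × G => p.1⁻¹ * p.2 * p.1) ⁻¹' (Z : Set G) := by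
      rintro ⟨x, g⟩ ⟨hx, hg⟩
      simp only [mem_singleton_iff] at hg
      subst hg
      simp only [Set.mem_preimage, mul_one, inv_mul_cancel, SetLike.mem_coe]
      exact Z.one_mem
    obtain ⟨u, v, _, hvo, hWu, hv1, huv⟩ :=
      generalized_tube_lemma hWc isCompact_singleton hA hsub
    refine Filter.mem_of_superset (hvo.mem_nhds (hv1 rfl)) ?_
    intro g hg x hx
    exact huv (Set.mk_mem_prod (hWu hx) hg)
  have hYleZ : Y ≤ Z := by
    intro g hg
    have := (hYmem g).1 hg 1 W.one_mem
    simpa using this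
  have hYleV : Y ≤ V := fun g hg => (Subgroup.mem_inf.1 (hZle (hYleZ hg))).1
  refine ⟨Y, hYopen, hYleV, ?_⟩
  -- conjugation stability
  have conjW : ∀ c ∈ W, ∀ y ∈ Y, c * y * c⁻¹ ∈ Y := by
    intro c hc y hy x hx
    have hx' : c⁻¹ * x ∈ W := W.mul_mem (W.inv_mem hc) hx
    have e : x⁻¹ * (c * y * c⁻¹) * x = (c⁻¹ * x)⁻¹ * y * (c⁻¹ * x) := by group
    rw [e]; exact (hYmem y).1 hy _ hx'
  have conjS : ∀ c : G, c ∈ (Subgroup.normalizer (W : Set G)) → c ∈ (Subgroup.normalizer (Z : Set G)) →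
      ∀ y ∈ Y, c * y * c⁻¹ ∈ Y := by
    intro c hcW hcZ y hy x hx
    have hx' : c⁻¹ * x * c ∈ W := by
      have := (Subgroup.mem_normalizer_iff.1 ((Subgroup.normalizer (W : Set G)).inv_mem hcW) x).1 hx
      simpa [inv_inv] using this
    have hin : (c⁻¹ * x * c)⁻¹ * y * (c⁻¹ * x * c) ∈ Z := (hYmem y).1 hy _ hx'
    have hconj : c * ((c⁻¹ * x * c)⁻¹ * y * (c⁻¹ * x * c)) * c⁻¹ ∈ Z :=
      (Subgroup.mem_normalizer_iff.1 hcZ _).1 hin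
    have e : x⁻¹ * (c * y * c⁻¹) * x
        = c * ((c⁻¹ * x * c)⁻¹ * y * (c⁻¹ * x * c)) * c⁻¹ := by group
    rwa [e]
  intro c hc
  rcases hc with hc | hc
  · -- c ∈ S
    have hcW : c ∈ (Subgroup.normalizer (W : Set G)) := hSW hc
    have hcZ : c ∈ (Subgroup.normalizer (Z : Set G)) := hZn hc
    exact mem_normalizer_of_conj (conjS c hcW hcZ)
      (by
        have := conjS c⁻¹ ((Subgroup.normalizer (W : Set G)).inv_mem hcW) ((Subgroup.normalizer (Z : Set G)).inv_mem hcZ)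
        simpa [inv_inv] using this)
  · -- c ∈ W
    exact mem_normalizer_of_conj (conjW c hc)
      (by
        have := conjW c⁻¹ (W.inv_mem hc)
        simpa [inv_inv] using this)

theorem sinfam_of_compact_open (W : Subgroup G) (hWo : IsOpen (W : Set G))
    (hWc : IsCompact (W : Set G)) : SINfam G (W : Set G) := by
  have := sinfam_union_subgroup (sinfam_empty (G := G)) W hWo hWc (empty_subset _)
  rwa [Set.empty_union] at this

theorem one_mem_sinCore : (1 : G) ∈ SINCore G := by
  refine (mem_sinCore_iff 1).2 fun S hS V hVc hVo => ?_
  obtain ⟨W, h1, h2, h3⟩ := hS V hVc hVo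
  refine ⟨W, h1, h2, union_subset ?_ h3⟩
  simpa [Set.singleton_subset_iff] using (Subgroup.normalizer (W : Set G)).one_mem

theorem mul_mem_sinCore {g h : G} (hg : g ∈ SINCore G) (hh : h ∈ SINCore G) :
    g * h ∈ SINCore G := by
  refine (mem_sinCore_iff _).2 fun S hS V hVc hVo => ?_
  have h2 : SINfam G ({g} ∪ ({h} ∪ S)) :=
    (mem_sinCore_iff g).1 hg _ ((mem_sinCore_iff h).1 hh S hS)
  obtain ⟨W, hW1, hW2, hW3⟩ := h2 V hVc hVo
  refine ⟨W, hW1, hW2, union_subset ?_ fun x hx => hW3 (Or.inr (Or.inr hx))⟩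
  intro x hx
  rw [Set.mem_singleton_iff] at hx
  subst hx
  exact (Subgroup.normalizer (W : Set G)).mul_mem (hW3 (Or.inl rfl)) (hW3 (Or.inr (Or.inl rfl)))

theorem inv_mem_sinCore {g : G} (hg : g ∈ SINCore G) : g⁻¹ ∈ SINCore G := by
  refine (mem_sinCore_iff _).2 fun S hS V hVc hVo => ?_
  obtain ⟨W, hW1, hW2, hW3⟩ := (mem_sinCore_iff g).1 hg S hS V hVc hVo
  refine ⟨W, hW1, hW2, union_subset ?_ fun x hx => hW3 (Or.inr hx)⟩
  intro x hx
  rw [Set.mem_singleton_iff] at hx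
  subst hx
  exact (Subgroup.normalizer (W : Set G)).inv_mem (hW3 (Or.inl rfl))

/-- The SIN-core as a subgroup. -/
def sinCoreSubgroup (G : Type*) [Group G] [TopologicalSpace G] [IsTopologicalGroup G] :
    Subgroup G where
  carrier := SINCore G
  one_mem' := one_mem_sinCore
  mul_mem' := fun h1 h2 => mul_mem_sinCore h1 h2
  inv_mem' := fun h => inv_mem_sinCore h

theorem isClosed_sinCore : IsClosed (SINCore G) := by
  rw [← closure_subset_iff_isClosed]
  intro u hu
  refine (mem_sinCore_iff u).2 fun S hS V hVc hVo => ?_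
  obtain ⟨W₀, hW₀o, hW₀le, hW₀n⟩ := hS V hVc hVo
  have hW₀closed : IsClosed (W₀ : Set G) := Subgroup.isClosed_of_isOpen _ hW₀o
  have hW₀c : IsCompact (W₀ : Set G) := hVc.of_isClosed_subset hW₀closed hW₀le
  have hSW₀ : SINfam G (S ∪ (W₀ : Set G)) :=
    sinfam_union_subgroup hS W₀ hW₀o hW₀c hW₀n
  have hopen : IsOpen {x : G | u⁻¹ * x ∈ (W₀ : Set G)} :=
    hW₀o.preimage (continuous_const.mul continuous_id)
  have hmem : u ∈ {x : G | u⁻¹ * x ∈ (W₀ : Set G)} := by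
    simp only [Set.mem_setOf_eq, inv_mul_cancel, SetLike.mem_coe]
    exact W₀.one_mem
  obtain ⟨a, haW, haN⟩ := mem_closure_iff.1 hu _ hopen hmem
  have hfam2 : SINfam G (insert a (S ∪ (W₀ : Set G))) :=
    sinfam_insert haN hSW₀
  obtain ⟨Z, hZo, hZle, hZn⟩ := hfam2 V hVc hVo
  refine ⟨Z, hZo, hZle, ?_⟩
  intro x hx
  rcases hx with hx | hx
  · -- x = u
    rw [Set.mem_singleton_iff] at hx
    subst hx
    have h1 : a ∈ (Subgroup.normalizer (Z : Set G)) := hZn (Set.mem_insert _ _)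
    have h2 : x⁻¹ * a ∈ (Subgroup.normalizer (Z : Set G)) := hZn (Set.mem_insert_of_mem _ (Or.inr haW))
    have e : x = a * (x⁻¹ * a)⁻¹ := by group
    rw [e]
    exact (Subgroup.normalizer (Z : Set G)).mul_mem h1 ((Subgroup.normalizer (Z : Set G)).inv_mem h2)
  · exact hZn (Set.mem_insert_of_mem _ (Or.inl hx))

end Aux

section VanDantzig

variable {G : Type*} [Group G] [TopologicalSpace G] [IsTopologicalGroup G]

/-- Multiplicative stability of a compact open set, local version of
`TopologicalGroup.exist_mul_closure_nhd`. -/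
theorem exist_mul_closure_nhd' {W : Set G} (hWc : IsCompact W) (hWo : IsOpen W) :
    ∃ T ∈ nhds (1 : G), W * T ⊆ W := by
  apply hWc.induction_on (p := fun S => ∃ T ∈ nhds (1 : G), S * T ⊆ W)
    ⟨Set.univ, by simp only [Filter.univ_mem, Set.empty_mul, Set.empty_subset, and_self]⟩
    (fun _ _ huv ⟨T, hT, mem⟩ => ⟨T, hT, (Set.mul_subset_mul_right huv).trans mem⟩)
    (fun U V ⟨T₁, hT₁, mem1⟩ ⟨T₂, hT₂, mem2⟩ => ⟨T₁ ∩ T₂, Filter.inter_mem hT₁ hT₂, by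
      rw [Set.union_mul]
      exact Set.union_subset
        ((Set.mul_subset_mul_left Set.inter_subset_left).trans mem1)
        ((Set.mul_subset_mul_left Set.inter_subset_right).trans mem2)⟩)
  intro x memW
  have : (x, 1) ∈ (fun p : G × G => p.1 * p.2) ⁻¹' W := by simp [memW]
  rcases isOpen_prod_iff.mp (continuous_mul.isOpen_preimage W hWo) x 1 this with
    ⟨U, V, Uopen, Vopen, xmemU, onememV, prodsub⟩
  have h6 : U * V ⊆ W :=
    Set.mul_subset_iff.mpr fun _ hx _ hy => prodsub (Set.mk_mem_prod hx hy)
  exact ⟨U ∩ W, ⟨U, Uopen.mem_nhds xmemU, W, fun _ a => a, rfl⟩,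
    V, Vopen.mem_nhds onememV, fun _ a => h6 ((Set.mul_subset_mul_right Set.inter_subset_left) a)⟩

/-- van Dantzig's theorem: in a t.d.l.c. group every neighbourhood of the identity contains
a compact open subgroup. -/
theorem exists_compact_open_subgroup [LocallyCompactSpace G] [TotallyDisconnectedSpace G]
    {O : Set G} (hO : IsOpen O) (h1 : 1 ∈ O) :
    ∃ V : Subgroup G, IsCompact (V : Set G) ∧ IsOpen (V : Set G) ∧ (V : Set G) ⊆ O := by
  haveI : T2Space G := IsTopologicalGroup.t2Space_iff_one_closed.2 isClosed_singleton
  obtain ⟨s, hsc, hs1, hsO⟩ := exists_compact_subset hO h1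
  obtain ⟨K, hKclopen, hK1, hKsub⟩ :=
    (loc_compact_Haus_tot_disc_of_zero_dim (H := G)).mem_nhds_iff.1
      (isOpen_interior.mem_nhds hs1)
  have hKc : IsCompact K := hsc.of_isClosed_subset hKclopen.1 (hKsub.trans interior_subset)
  have hKO : K ⊆ O := (hKsub.trans interior_subset).trans hsO
  obtain ⟨T, hT, hTW⟩ := exist_mul_closure_nhd' hKc hKclopen.2
  obtain ⟨U', hU'T, hU'o, hU'1⟩ := mem_nhds_iff.1 hT
  set B := U' ∩ U'⁻¹ with hBdef
  have hB1 : (1 : G) ∈ B := ⟨hU'1, by simpa using hU'1⟩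
  have hBo : IsOpen B := hU'o.inter hU'o.inv
  have hBinv : B⁻¹ = B := by
    rw [hBdef, Set.inter_inv, inv_inv, Set.inter_comm]
  have hBT : B ⊆ T := Set.inter_subset_left.trans hU'T
  set S : Subgroup G :=
    { carrier := ⋃ n : ℕ, B ^ (n + 1)
      mul_mem' := by
        intro a b ha hb
        rcases Set.mem_iUnion.mp ha with ⟨k, hk⟩
        rcases Set.mem_iUnion.mp hb with ⟨l, hl⟩
        apply Set.mem_iUnion.mpr
        exact ⟨k + 1 + l, by rw [add_assoc, pow_add]; exact Set.mul_mem_mul hk hl⟩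
      one_mem' := Set.mem_iUnion.mpr ⟨0, by simpa [pow_one] using hB1⟩
      inv_mem' := by
        intro a ha
        rcases Set.mem_iUnion.mp ha with ⟨k, hk⟩
        apply Set.mem_iUnion.mpr
        refine ⟨k, ?_⟩
        rw [← hBinv]
        simpa only [inv_pow, Set.mem_inv, inv_inv] using hk } with hSdef
  have hBS : B ⊆ (S : Set G) := fun x hx =>
    Set.mem_iUnion.mpr ⟨0, by simpa [pow_one] using hx⟩
  have hSopen : IsOpen (S : Set G) :=
    Subgroup.isOpen_of_mem_nhds S (Filter.mem_of_superset (hBo.mem_nhds hB1) hBS)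
  have mulpow : ∀ n : ℕ, K * B ^ (n + 1) ⊆ K := by
    intro n
    induction n with
    | zero => rw [pow_one]; exact (Set.mul_subset_mul_left hBT).trans hTW
    | succ n ih =>
      rw [pow_succ, ← mul_assoc]
      exact (Set.mul_subset_mul_right ih).trans
        ((Set.mul_subset_mul_left hBT).trans hTW)
  have hSsub : (S : Set G) ⊆ K := by
    refine Set.iUnion_subset fun n x hx => ?_
    exact mulpow n ⟨1, hK1, x, hx, one_mul x⟩
  have hScompact : IsCompact (S : Set G) :=
    hKc.of_isClosed_subset (Subgroup.isClosed_of_isOpen S hSopen) hSsub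
  exact ⟨S, hScompact, hSopen, hSsub.trans hKO⟩

end VanDantzig

/-- The SIN-core of a t.d.l.c.s.c. group is an increasing union of compactly generated
relatively open subgroups each of which is a SIN group. -/
theorem sinCore_union_of_cg_open_SIN (G : Type*) [Group G] [TopologicalSpace G]
    [IsTopologicalGroup G] [LocallyCompactSpace G] [TotallyDisconnectedSpace G]
    [SecondCountableTopology G] :
    ∃ H : ℕ → Subgroup G,
      Monotone H ∧
      (⋃ i, (H i : Set G)) = SINCore G ∧
      ∀ i : ℕ,
        -- compactly generated
        (∃ K : Set G, IsCompact K ∧ Subgroup.closure K = H i) ∧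
        -- relatively open in the SIN-core
        (∃ O : Set G, IsOpen O ∧ (H i : Set G) = O ∩ SINCore G) ∧
        -- a SIN group: every neighbourhood of 1 contains a compact relatively open
        -- subgroup normal in `H i`
        (∀ O : Set G, IsOpen O → (1 : G) ∈ O →
          ∃ K : Subgroup G, K ≤ H i ∧ IsCompact (K : Set G) ∧
            (∃ O' : Set G, IsOpen O' ∧ (K : Set G) = O' ∩ (H i : Set G)) ∧
            H i ≤ Subgroup.normalizer (K : Set G) ∧ (K : Set G) ⊆ O) := by
  classical
  haveI : T2Space G := IsTopologicalGroup.t2Space_iff_one_closed.2 isClosed_singleton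
  obtain ⟨U₀, hU₀c, hU₀o, -⟩ :=
    exists_compact_open_subgroup (G := G) isOpen_univ (Set.mem_univ 1)
  have hNclosed : IsClosed (SINCore G) := isClosed_sinCore
  -- dense sequence in the SIN-core
  haveI : Nonempty (SINCore G) := ⟨⟨1, one_mem_sinCore⟩⟩
  set q : ℕ → (SINCore G) := TopologicalSpace.denseSeq (SINCore G) with hqdef
  have hq : DenseRange q := TopologicalSpace.denseRange_denseSeq _
  set a : ℕ → G := fun n => (q n : G) with hadef
  have haN : ∀ n, a n ∈ SINCore G := fun n => (q n).2
  -- the subgroups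
  set H : ℕ → Subgroup G := fun i =>
    Subgroup.closure ((a '' Set.Iic i) ∪ (SINCore G ∩ (U₀ : Set G))) with hHdef
  have hgen : ∀ i, (a '' Set.Iic i) ∪ (SINCore G ∩ (U₀ : Set G)) ⊆ SINCore G := by
    intro i x hx
    rcases hx with ⟨n, _, rfl⟩ | hx
    · exact haN n
    · exact hx.1
  have hHle : ∀ i, (H i : Set G) ⊆ SINCore G := by
    intro i
    have : H i ≤ sinCoreSubgroup G := (Subgroup.closure_le _).2 (hgen i)
    exact fun x hx => this hx
  have hmono : Monotone H := by
    intro i j hij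
    apply Subgroup.closure_mono
    apply Set.union_subset_union_left
    exact Set.image_mono (Set.Iic_subset_Iic.2 hij)
  -- the fam chain
  have famBase : SINfam G (U₀ : Set G) := sinfam_of_compact_open U₀ hU₀o hU₀c
  have famStep : ∀ i : ℕ, SINfam G ((a '' Set.Iic i) ∪ (U₀ : Set G)) := by
    intro i
    induction i with
    | zero =>
      have h0 : (a '' Set.Iic 0) ∪ (U₀ : Set G)
          = insert (a 0) (U₀ : Set G) := by
        have : Set.Iic (0 : ℕ) = {0} := by ext n; simp [Nat.le_zero]
        rw [this, Set.image_singleton, Set.singleton_union]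
      rw [h0]
      exact sinfam_insert (haN 0) famBase
    | succ n ih =>
      have h0 : (a '' Set.Iic (n + 1)) ∪ (U₀ : Set G)
          = insert (a (n + 1)) ((a '' Set.Iic n) ∪ (U₀ : Set G)) := by
        have : Set.Iic (n + 1) = insert (n + 1) (Set.Iic n) := by
          ext m
          simp only [Set.mem_Iic, Set.mem_insert_iff]
          omega
        rw [this, Set.image_insert_eq, Set.insert_union]
      rw [h0]
      exact sinfam_insert (haN (n + 1)) ih
  refine ⟨H, hmono, ?_, ?_⟩
  · -- union equals SINCore
    apply Set.Subset.antisymm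
    · exact Set.iUnion_subset fun i => hHle i
    · intro g hg
      -- find a dense-sequence element in g • U₀
      have hopen : IsOpen {x : SINCore G | g⁻¹ * (x : G) ∈ (U₀ : Set G)} := by
        have : Continuous fun x : SINCore G => g⁻¹ * (x : G) :=
          continuous_const.mul continuous_subtype_val
        exact hU₀o.preimage this
      have hne : {x : SINCore G | g⁻¹ * (x : G) ∈ (U₀ : Set G)}.Nonempty := by
        refine ⟨⟨g, hg⟩, ?_⟩
        simp only [Set.mem_setOf_eq, inv_mul_cancel]
        exact U₀.one_mem
      obtain ⟨n, hn⟩ := hq.exists_mem_open hopen hne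
      have hw : g⁻¹ * a n ∈ (U₀ : Set G) := hn
      have hwN : g⁻¹ * a n ∈ SINCore G :=
        mul_mem_sinCore (inv_mem_sinCore hg) (haN n)
      refine Set.mem_iUnion.2 ⟨n, ?_⟩
      have han : a n ∈ H n :=
        Subgroup.subset_closure (Or.inl ⟨n, by simp, rfl⟩)
      have hwH : g⁻¹ * a n ∈ H n :=
        Subgroup.subset_closure (Or.inr ⟨hwN, hw⟩)
      have : a n * (g⁻¹ * a n)⁻¹ ∈ H n := (H n).mul_mem han ((H n).inv_mem hwH)
      have e : a n * (g⁻¹ * a n)⁻¹ = g := by group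
      rwa [e] at this
  · intro i
    refine ⟨?_, ?_, ?_⟩
    · -- compactly generated
      refine ⟨(a '' Set.Iic i) ∪ (SINCore G ∩ (U₀ : Set G)), ?_, rfl⟩
      apply IsCompact.union
      · exact ((Set.finite_Iic i).image a).isCompact
      · exact hU₀c.of_isClosed_subset (hNclosed.inter (Subgroup.isClosed_of_isOpen _ hU₀o))
          Set.inter_subset_right
    · -- relatively open
      refine ⟨(H i : Set G) * (U₀ : Set G), IsOpen.mul_left hU₀o, ?_⟩
      apply Set.Subset.antisymm
      · intro h hh
        exact ⟨⟨h, hh, 1, U₀.one_mem, mul_one h⟩, hHle i hh⟩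
      · rintro x ⟨⟨h, hh, u, hu, rfl⟩, hxN⟩
        have huN : u ∈ SINCore G := by
          have hhN : h ∈ SINCore G := hHle i hh
          have : h⁻¹ * (h * u) ∈ SINCore G :=
            mul_mem_sinCore (inv_mem_sinCore hhN) hxN
          simpa [mul_assoc] using this
        have huH : u ∈ H i := Subgroup.subset_closure (Or.inr ⟨huN, hu⟩)
        exact (H i).mul_mem hh huH
    · -- SIN property
      intro O hOo hO1
      obtain ⟨V, hVc, hVo, hVO⟩ := exists_compact_open_subgroup (G := G) hOo hO1
      have hVU₀c : IsCompact ((V ⊓ U₀ : Subgroup G) : Set G) := by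
        rw [Subgroup.coe_inf]
        exact hVc.inter_right (Subgroup.isClosed_of_isOpen _ hU₀o)
      have hVU₀o : IsOpen ((V ⊓ U₀ : Subgroup G) : Set G) := by
        rw [Subgroup.coe_inf]; exact hVo.inter hU₀o
      obtain ⟨Z, hZo, hZle, hZn⟩ := famStep i (V ⊓ U₀) hVU₀c hVU₀o
      have hZU₀ : Z ≤ U₀ := hZle.trans inf_le_right
      have hZV : Z ≤ V := hZle.trans inf_le_left
      refine ⟨sinCoreSubgroup G ⊓ Z, ?_, ?_, ?_, ?_, ?_⟩
      · -- ≤ H i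
        intro x hx
        rw [Subgroup.mem_inf] at hx
        exact Subgroup.subset_closure (Or.inr ⟨hx.1, hZU₀ hx.2⟩)
      · -- compact
        rw [Subgroup.coe_inf]
        refine hVc.of_isClosed_subset
          (hNclosed.inter (Subgroup.isClosed_of_isOpen _ hZo)) ?_
        exact fun x hx => hZV hx.2
      · -- relatively open
        refine ⟨(Z : Set G), hZo, ?_⟩
        rw [Subgroup.coe_inf]
        apply Set.Subset.antisymm
        · rintro x ⟨hxN, hxZ⟩
          exact ⟨hxZ, Subgroup.subset_closure (Or.inr ⟨hxN, hZU₀ hxZ⟩)⟩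
        · rintro x ⟨hxZ, hxH⟩
          exact ⟨hHle i hxH, hxZ⟩
      · -- normalized by H i
        rw [hHdef]
        refine (Subgroup.closure_le _).2 ?_
        intro x hx
        have hxN : x ∈ SINCore G := hgen i hx
        have hxZn : x ∈ (Subgroup.normalizer (Z : Set G)) := by
          rcases hx with hx | hx
          · exact hZn (Or.inl hx)
          · exact hZn (Or.inr hx.2)
        refine Subgroup.mem_normalizer_iff.2 fun h => ?_
        rw [Subgroup.mem_inf, Subgroup.mem_inf]
        constructor
        · rintro ⟨h1, h2⟩
          refine ⟨?_, (Subgroup.mem_normalizer_iff.1 hxZn h).1 h2⟩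
          exact mul_mem (mul_mem hxN h1) (inv_mem_sinCore hxN)
        · rintro ⟨h1, h2⟩
          refine ⟨?_, (Subgroup.mem_normalizer_iff.1 hxZn h).2 h2⟩
          have : x⁻¹ * (x * h * x⁻¹) * x ∈ SINCore G :=
            mul_mem (mul_mem (inv_mem_sinCore hxN) h1) hxN
          have e : x⁻¹ * (x * h * x⁻¹) * x = h := by group
          rwa [e] at this
      · -- contained in O
        rw [Subgroup.coe_inf]
        exact fun x hx => hVO (hZV hx.2)
end

section
/- Let G be a compactly generated totally disconnected locally compact second countable group and let N be a closed cocompact normal subgroup of G that is a SIN group. Then G is a SIN group. -/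
open Set
open scoped Pointwise

private lemma tube_aux {X Y Z : Type*} [TopologicalSpace X] [TopologicalSpace Y]
    [TopologicalSpace Z] {F : X × Y → Z} (hF : Continuous F) {C : Set X} (hC : IsCompact C)
    {P : Set Z} (hP : IsOpen P) {y₀ : Y} (h : ∀ c ∈ C, F (c, y₀) ∈ P) :
    ∃ O : Set Y, IsOpen O ∧ y₀ ∈ O ∧ ∀ c ∈ C, ∀ a ∈ O, F (c, a) ∈ P := by
  have key : ∀ c ∈ C, ∃ u : Set X, ∃ v : Set Y, IsOpen u ∧ IsOpen v ∧ c ∈ u ∧ y₀ ∈ v ∧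
      ∀ a ∈ u, ∀ b ∈ v, F (a, b) ∈ P := by
    intro c hc
    have hopen : IsOpen (F ⁻¹' P) := hP.preimage hF
    have hmem : (c, y₀) ∈ F ⁻¹' P := h c hc
    rcases isOpen_prod_iff.1 hopen c y₀ hmem with ⟨u, v, hu, hv, hcu, hyv, huv⟩
    exact ⟨u, v, hu, hv, hcu, hyv, fun a ha b hb => huv (Set.mk_mem_prod ha hb)⟩
  choose! u v hu hv hcu hyv hsub using key
  rcases hC.elim_nhds_subcover u (fun c hc => (hu c hc).mem_nhds (hcu c hc)) with ⟨t, htC, hcov⟩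
  refine ⟨⋂ c ∈ t, v c, isOpen_biInter_finset (fun c hc => hv c (htC c hc)),
    mem_iInter₂.2 fun c hc => hyv c (htC c hc), ?_⟩
  intro c hc a ha
  rcases mem_iUnion₂.1 (hcov hc) with ⟨c₀, hc₀, hcc₀⟩
  exact hsub c₀ (htC c₀ hc₀) c hcc₀ a (mem_iInter₂.1 ha c₀ hc₀)

private lemma t2_aux {G : Type*} [Group G] [TopologicalSpace G] [IsTopologicalGroup G]
    [TotallyDisconnectedSpace G] : T2Space G := by
  have h1 : IsClosed ({1} : Set G) := by
    have h := totallyDisconnectedSpace_iff_connectedComponent_singleton.mp ‹_› (1 : G)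
    rw [← h]
    exact isClosed_connectedComponent
  exact IsTopologicalGroup.t2Space_iff_one_closed.mpr h1

private lemma vanDantzig_aux {G : Type*} [Group G] [TopologicalSpace G] [IsTopologicalGroup G]
    [LocallyCompactSpace G] [TotallyDisconnectedSpace G] {O : Set G} (hO : IsOpen O)
    (h1O : (1 : G) ∈ O) :
    ∃ U : Subgroup G, IsCompact (U : Set G) ∧ IsOpen (U : Set G) ∧ (U : Set G) ⊆ O := by
  haveI : T2Space G := t2_aux
  obtain ⟨s, hscomp, hs1, hsO⟩ := exists_compact_subset hO h1O
  obtain ⟨W, hWclopen, h1W, hWsub⟩ :=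
    (loc_compact_Haus_tot_disc_of_zero_dim).mem_nhds_iff.1 (isOpen_interior.mem_nhds hs1)
  have hWclopen : IsClopen W := hWclopen
  have hWcomp : IsCompact W := hscomp.of_isClosed_subset hWclopen.1 (hWsub.trans interior_subset)
  obtain ⟨T, hTopen, h1T, hT⟩ := tube_aux (y₀ := (1:G)) (continuous_mul (M := G)) hWcomp hWclopen.2
      (fun c hc => by simpa using hc)
  set S₁ := T ∩ T⁻¹ with hS₁def
  have hS₁open : IsOpen S₁ := hTopen.inter hTopen.inv
  have h1S₁ : (1 : G) ∈ S₁ := ⟨h1T, by simpa using h1T⟩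
  have hkey : ∀ g ∈ Subgroup.closure S₁, ∀ v ∈ W, v * g ∈ W ∧ v * g⁻¹ ∈ W := by
    intro g hg
    refine Subgroup.closure_induction ?_ ?_ ?_ ?_ hg
    · intro x hx v hv
      exact ⟨hT v hv x hx.1, hT v hv x⁻¹ hx.2⟩
    · intro v hv
      constructor <;> simpa using hv
    · intro x y _ _ hx hy v hv
      constructor
      · have h2 := (hy (v * x) (hx v hv).1).1
        rwa [mul_assoc] at h2
      · have h2 := (hx (v * y⁻¹) (hy v hv).2).2
        rwa [mul_inv_rev, ← mul_assoc]
    · intro x _ hx v hv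
      exact ⟨(hx v hv).2, by simpa using (hx v hv).1⟩
  have hsubW : (Subgroup.closure S₁ : Set G) ⊆ W := by
    intro g hg
    have h2 := (hkey g hg 1 h1W).1
    rwa [one_mul] at h2
  have hopen : IsOpen ((Subgroup.closure S₁ : Subgroup G) : Set G) :=
    Subgroup.isOpen_of_mem_nhds _ (Filter.mem_of_superset (hS₁open.mem_nhds h1S₁)
      Subgroup.subset_closure)
  exact ⟨Subgroup.closure S₁,
    hWcomp.of_isClosed_subset ((Subgroup.closure S₁).isClosed_of_isOpen hopen) hsubW,
    hopen, hsubW.trans (hWsub.trans (interior_subset.trans hsO))⟩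
/-- If a compactly generated t.d.l.c.s.c. group `G` has a closed cocompact normal subgroup
`N` which is a SIN group, then `G` is a SIN group. -/
theorem SIN_of_cocompact_SIN_normal (G : Type*) [Group G] [TopologicalSpace G]
    [IsTopologicalGroup G] [LocallyCompactSpace G] [TotallyDisconnectedSpace G]
    [SecondCountableTopology G]
    (hcg : ∃ X : Set G, IsCompact X ∧ Subgroup.closure X = ⊤)
    (N : Subgroup G) [N.Normal] (hNc : IsClosed (N : Set G))
    (hcocompact : CompactSpace (G ⧸ N))
    -- N is a SIN group: every neighbourhood of 1 contains a compact relatively open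
    -- subgroup of N which is normal in N
    (hNSIN : ∀ O : Set G, IsOpen O → (1 : G) ∈ O →
      ∃ K : Subgroup G, K ≤ N ∧ IsCompact (K : Set G) ∧
        (∃ O' : Set G, IsOpen O' ∧ (K : Set G) = O' ∩ (N : Set G)) ∧
        (∀ n ∈ N, ∀ k ∈ K, n * k * n⁻¹ ∈ K) ∧ (K : Set G) ⊆ O) :
    -- G is a SIN group: a basis at 1 of compact open normal subgroups
    ∀ O : Set G, IsOpen O → (1 : G) ∈ O →
      ∃ K : Subgroup G, K.Normal ∧ IsCompact (K : Set G) ∧ IsOpen (K : Set G) ∧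
        (K : Set G) ⊆ O := by
  intro O hO h1O
  haveI : T2Space G := t2_aux
  have hNn : N.Normal := inferInstance
  obtain ⟨X, hXcomp, hXtop⟩ := hcg
  -- a compact open subgroup U ⊆ O
  obtain ⟨U, hUcomp, hUopen, hUO⟩ := vanDantzig_aux hO h1O
  -- a compact set C₁ of coset representatives for N, containing 1
  have hcover : (Set.univ : Set (G ⧸ N)) ⊆
      ⋃ g : G, (QuotientGroup.mk '' ((g * ·) '' (U : Set G))) := by
    rintro q -
    obtain ⟨g, rfl⟩ := QuotientGroup.mk_surjective q
    exact mem_iUnion.2 ⟨g, ⟨g * 1, ⟨1, one_mem U, rfl⟩, by rw [mul_one]⟩⟩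
  obtain ⟨T, hT⟩ := isCompact_univ.elim_finite_subcover
      (fun g : G => QuotientGroup.mk '' ((g * ·) '' (U : Set G)))
      (fun g => QuotientGroup.isOpenMap_coe _ (isOpenMap_mul_left g _ hUopen)) hcover
  set C₀ : Set G := ⋃ g ∈ T, (g * ·) '' (U : Set G) with hC₀def
  have hC₀comp : IsCompact C₀ :=
    T.finite_toSet.isCompact_biUnion (fun g _ => hUcomp.image (continuous_mul_left g))
  set C₁ : Set G := insert (1 : G) C₀ with hC₁def
  have hC₁comp : IsCompact C₁ := hC₀comp.insert 1
  have h1C₁ : (1 : G) ∈ C₁ := mem_insert _ _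
  have covN : ∀ g : G, ∃ c ∈ C₁, c⁻¹ * g ∈ N := by
    intro g
    have hg : (g : G ⧸ N) ∈ ⋃ g₀ ∈ T, QuotientGroup.mk '' ((g₀ * ·) '' (U : Set G)) :=
      hT (mem_univ _)
    rcases mem_iUnion₂.1 hg with ⟨g₀, hg₀, x, hx, hxg⟩
    rcases hx with ⟨u, hu, rfl⟩
    exact ⟨g₀ * u, mem_insert_iff.2 (Or.inr (mem_iUnion₂.2 ⟨g₀, hg₀, ⟨u, hu, rfl⟩⟩)),
      QuotientGroup.eq.1 hxg⟩
  -- apply SIN property of N inside U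
  obtain ⟨K, hKN, hKcomp, ⟨O', hO'open, hKO'⟩, hKnormN, hKU⟩ :=
    hNSIN (U : Set G) hUopen (one_mem U)
  have h1O' : (1 : G) ∈ O' := by
    have h1K : (1 : G) ∈ (K : Set G) := one_mem K
    rw [hKO'] at h1K
    exact h1K.1
  -- M := normal core of K, taken over C₁ conjugates
  set M : Subgroup G := K.normalCore with hMdef
  have mem_M : ∀ a : G, a ∈ M ↔ ∀ b : G, b * a * b⁻¹ ∈ K := fun a => Iff.rfl
  have hMK : M ≤ K := K.normalCore_le
  have hMN : M ≤ N := le_trans hMK hKN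
  haveI hMnormal : M.Normal := K.normalCore_normal
  have hKclosed : IsClosed (K : Set G) := hKcomp.isClosed
  have hMclosed : IsClosed (M : Set G) := by
    have hset : (M : Set G) = ⋂ b : G, (fun a => b * a * b⁻¹) ⁻¹' (K : Set G) := by
      ext a
      exact ⟨fun h => mem_iInter.2 fun b => (mem_M a).1 h b,
        fun h => (mem_M a).2 fun b => mem_iInter.1 h b⟩
    rw [hset]
    exact isClosed_iInter fun b =>
      hKclosed.preimage (((continuous_const.mul continuous_id).mul continuous_const))
  have hMcomp : IsCompact (M : Set G) := hKcomp.of_isClosed_subset hMclosed hMK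
  -- M is relatively open in N: find O₂
  obtain ⟨O₂, hO₂open, h1O₂, hO₂⟩ := tube_aux (y₀ := (1 : G))
      (F := fun p : G × G => p.1 * p.2 * p.1⁻¹)
      (by continuity) hC₁comp hO'open (fun c hc => by simpa using h1O')
  have hO₂M : O₂ ∩ (N : Set G) ⊆ (M : Set G) := by
    -- the set of elements of N all of whose C₁-conjugates lie in K
    set T' : Set G := {a | a ∈ N ∧ ∀ c ∈ C₁, c * a * c⁻¹ ∈ K} with hT'def
    have hT'conj : ∀ n ∈ N, ∀ a ∈ T', n * a * n⁻¹ ∈ T' := by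
      intro n hn a ha
      refine ⟨mul_mem (mul_mem (hn) ha.1) (inv_mem hn), ?_⟩
      intro c hc
      have heq : c * (n * a * n⁻¹) * c⁻¹ =
          (c * n * c⁻¹) * (c * a * c⁻¹) * (c * n * c⁻¹)⁻¹ := by group
      rw [heq]
      exact hKnormN (c * n * c⁻¹) (hNn.conj_mem n hn c) _ (ha.2 c hc)
    have hT'M : T' ⊆ (M : Set G) := by
      intro a ha
      refine (mem_M a).2 fun b => ?_
      obtain ⟨c, hc, hcb⟩ := covN b
      have heq : b * a * b⁻¹ = c * ((c⁻¹ * b) * a * (c⁻¹ * b)⁻¹) * c⁻¹ := by group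
      rw [heq]
      exact (hT'conj (c⁻¹ * b) hcb a ha).2 c hc
    intro a ha
    refine hT'M ⟨ha.2, fun c hc => ?_⟩
    have h1 : c * a * c⁻¹ ∈ O' := hO₂ c hc a ha.1
    have h2 : c * a * c⁻¹ ∈ N := by
      have := hNn.conj_mem a ha.2 c
      simpa [mul_assoc] using this
    show c * a * c⁻¹ ∈ (K : Set G)
    rw [hKO']
    exact ⟨h1, h2⟩
  set WM : Set G := (M : Set G) * O₂ with hWMdef
  have hWMopen : IsOpen WM := hO₂open.mul_left
  have h1WM : (1 : G) ∈ WM := ⟨1, one_mem M, 1, h1O₂, mul_one 1⟩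
  have hWM : WM ∩ (N : Set G) = (M : Set G) := by
    apply subset_antisymm
    · rintro x ⟨⟨m, hm, a, ha, rfl⟩, hxN⟩
      have haN : a ∈ N := by
        have : m⁻¹ * (m * a) ∈ N := mul_mem (inv_mem (hMN hm)) hxN
        simpa using this
      have haM : a ∈ M := hO₂M ⟨ha, haN⟩
      exact mul_mem hm haM
    · intro m hm
      exact ⟨⟨m, hm, 1, h1O₂, mul_one m⟩, hMN hm⟩
  -- finite generation of N modulo M
  set Xs : Set G := X ∪ X⁻¹ with hXsdef
  have hXscomp : IsCompact Xs := hXcomp.union hXcomp.inv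
  set Comp : Set G := (C₁⁻¹ * Xs * C₁) ∪ C₁ with hCompdef
  have hCompcomp : IsCompact Comp := ((hC₁comp.inv.mul hXscomp).mul hC₁comp).union hC₁comp
  set F₀ : Set G := Comp ∩ (N : Set G) with hF₀def
  have hF₀comp : IsCompact F₀ := hCompcomp.inter_right hNc
  have hF₀N : F₀ ⊆ (N : Set G) := inter_subset_right
  set H : Subgroup G := Subgroup.closure F₀ with hHdef
  have hHN : H ≤ N := (Subgroup.closure_le N).2 hF₀N
  have hmain : ∀ L : List G, (∀ y ∈ L, y ∈ Xs) → ∃ c ∈ C₁, c⁻¹ * L.prod ∈ H := by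
    intro L
    induction L with
    | nil => exact fun _ => ⟨1, h1C₁, by simpa using one_mem H⟩
    | cons x L ih =>
      intro hmem
      obtain ⟨c', hc', hh⟩ := ih (fun y hy => hmem y (List.mem_cons_of_mem x hy))
      have hx : x ∈ Xs := hmem x (List.mem_cons_self (a := x) (l := L))
      obtain ⟨c, hc, hn⟩ := covN (x * c')
      have hfC : c⁻¹ * (x * c') ∈ C₁⁻¹ * Xs * C₁ := by
        refine ⟨c⁻¹ * x, ⟨c⁻¹, Set.inv_mem_inv.2 hc, x, hx, rfl⟩, c', hc', ?_⟩
        show c⁻¹ * x * c' = c⁻¹ * (x * c')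
        rw [mul_assoc]
      have hf : c⁻¹ * (x * c') ∈ H :=
        Subgroup.subset_closure ⟨Or.inl hfC, hn⟩
      refine ⟨c, hc, ?_⟩
      have heq : c⁻¹ * (x :: L).prod = (c⁻¹ * (x * c')) * (c'⁻¹ * L.prod) := by
        rw [List.prod_cons]; group
      rw [heq]
      exact mul_mem hf hh
  have hNH : ∀ n ∈ N, n ∈ H := by
    intro n hn
    have hn1 : n ∈ (Subgroup.closure X).toSubmonoid := by
      rw [hXtop]; exact Subgroup.mem_top n
    rw [Subgroup.closure_toSubmonoid] at hn1
    obtain ⟨L, hL, hLprod⟩ := Submonoid.exists_list_of_mem_closure hn1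
    obtain ⟨c, hc, hh⟩ := hmain L hL
    rw [hLprod] at hh
    have hcN : c ∈ N := by
      have h2 : n * (c⁻¹ * n)⁻¹ ∈ N := mul_mem hn (inv_mem (hHN hh))
      have heq : n * (c⁻¹ * n)⁻¹ = c := by group
      rwa [heq] at h2
    have hcH : c ∈ H := Subgroup.subset_closure ⟨Or.inr hc, hcN⟩
    have heq : n = c * (c⁻¹ * n) := by group
    rw [heq]
    exact mul_mem hcH hh
  -- extract a finite set of generators of N modulo M
  obtain ⟨t, htF₀, htcov⟩ := hF₀comp.elim_nhds_subcover (fun f => (f * ·) '' WM)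
      (fun f _ => (isOpenMap_mul_left f _ hWMopen).mem_nhds ⟨1, h1WM, mul_one f⟩)
  have htN : ∀ f ∈ t, f ∈ N := fun f hf => hF₀N (htF₀ f hf)
  set H₂ : Subgroup G := Subgroup.closure ((t : Set G) ∪ (M : Set G)) with hH₂def
  have hNH₂ : ∀ n ∈ N, n ∈ H₂ := by
    have hF₀H₂ : F₀ ⊆ (H₂ : Set G) := by
      intro x hx
      rcases mem_iUnion₂.1 (htcov hx) with ⟨f, hf, w, hw, rfl⟩
      have hwN : w ∈ N := by
        have h2 : f⁻¹ * (f * w) ∈ N := mul_mem (inv_mem (htN f hf)) (hF₀N hx)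
        simpa using h2
      have hwM : w ∈ M := by
        have h3 : w ∈ (M : Set G) := by rw [← hWM]; exact ⟨hw, hwN⟩
        exact h3
      exact mul_mem (Subgroup.subset_closure (Or.inl hf))
        (Subgroup.subset_closure (Or.inr hwM))
    intro n hn
    exact (Subgroup.closure_le H₂).2 hF₀H₂ (hNH n hn)
  -- the "centralizer of N modulo M" subgroup
  set ZN : Subgroup G :=
    { carrier := {g : G | ∀ n ∈ N, g * n * g⁻¹ * n⁻¹ ∈ M}
      one_mem' := by
        intro n hn
        have heq : (1 : G) * n * 1⁻¹ * n⁻¹ = 1 := by group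
        rw [heq]; exact one_mem M
      mul_mem' := by
        intro a b ha hb n hn
        have heq : a * b * n * (a * b)⁻¹ * n⁻¹ =
            (a * (b * n * b⁻¹ * n⁻¹) * a⁻¹) * (a * n * a⁻¹ * n⁻¹) := by group
        rw [heq]
        exact mul_mem (hMnormal.conj_mem _ (hb n hn) a) (ha n hn)
      inv_mem' := by
        intro a ha n hn
        have h2 := ha (a⁻¹ * n * a) (by
          have := hNn.conj_mem n hn a⁻¹
          simpa [mul_assoc] using this)
        have heq : a⁻¹ * n * a⁻¹⁻¹ * n⁻¹ = (a * (a⁻¹ * n * a) * a⁻¹ * (a⁻¹ * n * a)⁻¹)⁻¹ := by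
          group
        rw [heq]
        exact inv_mem h2 } with hZNdef
  have hMsubWM : (M : Set G) ⊆ WM := by rw [← hWM]; exact inter_subset_left
  -- ZN is open
  have hZNopen : IsOpen (ZN : Set G) := by
    have hset : (ZN : Set G) = ⋂ f ∈ t, (fun g : G => g * f * g⁻¹ * f⁻¹) ⁻¹' WM := by
      apply subset_antisymm
      · intro g hg
        refine mem_iInter₂.2 fun f hf => ?_
        exact hMsubWM (hg f (htN f hf))
      · intro g hg
        intro n hn
        -- the set of n ∈ G such that g commutes with n mod M is a subgroup
        set Sg : Subgroup G :=
          { carrier := {n : G | g * n * g⁻¹ * n⁻¹ ∈ M}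
            one_mem' := by
              have heq : g * 1 * g⁻¹ * 1⁻¹ = 1 := by group
              show g * 1 * g⁻¹ * 1⁻¹ ∈ M
              rw [heq]; exact one_mem M
            mul_mem' := by
              intro a b ha hb
              show g * (a * b) * g⁻¹ * (a * b)⁻¹ ∈ M
              have heq : g * (a * b) * g⁻¹ * (a * b)⁻¹ =
                  (g * a * g⁻¹ * a⁻¹) * (a * (g * b * g⁻¹ * b⁻¹) * a⁻¹) := by group
              rw [heq]
              exact mul_mem ha (hMnormal.conj_mem _ hb a)
            inv_mem' := by
              intro a ha
              show g * a⁻¹ * g⁻¹ * a⁻¹⁻¹ ∈ M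
              have heq : g * a⁻¹ * g⁻¹ * a⁻¹⁻¹ = (a⁻¹ * (g * a * g⁻¹ * a⁻¹) * a⁻¹⁻¹)⁻¹ := by group
              rw [heq]
              exact inv_mem (hMnormal.conj_mem _ ha a⁻¹) }
        have htSg : ∀ f ∈ t, f ∈ Sg := by
          intro f hf
          have h1 : g * f * g⁻¹ * f⁻¹ ∈ WM := mem_iInter₂.1 hg f hf
          have h2 : g * f * g⁻¹ * f⁻¹ ∈ N := by
            have hfN := htN f hf
            exact mul_mem (hNn.conj_mem f hfN g) (inv_mem hfN)
          show g * f * g⁻¹ * f⁻¹ ∈ M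
          have h3 : g * f * g⁻¹ * f⁻¹ ∈ (M : Set G) := by rw [← hWM]; exact ⟨h1, h2⟩
          exact h3
        have hMSg : ∀ m ∈ M, m ∈ Sg := by
          intro m hm
          show g * m * g⁻¹ * m⁻¹ ∈ M
          exact mul_mem (hMnormal.conj_mem m hm g) (inv_mem hm)
        have hH₂Sg : H₂ ≤ Sg := by
          rw [hH₂def]
          refine (Subgroup.closure_le Sg).2 ?_
          rintro x (hx | hx)
          · exact htSg x hx
          · exact hMSg x hx
        exact hH₂Sg (hNH₂ n hn)
    rw [hset]
    exact isOpen_biInter_finset fun f hf =>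
      hWMopen.preimage (((continuous_id.mul continuous_const).mul continuous_inv).mul
        continuous_const)
  -- the subgroup P = (U ⊓ ZN) ⊔ M : open, compact, normalized by N
  set V : Subgroup G := U ⊓ ZN with hVdef
  set P : Subgroup G := V ⊔ M with hPdef
  have hVopen : IsOpen (V : Set G) := by
    rw [hVdef, Subgroup.coe_inf]
    exact hUopen.inter hZNopen
  have hPopen : IsOpen (P : Set G) := Subgroup.isOpen_mono le_sup_left hVopen
  have hKU' : K ≤ U := fun x hx => hKU hx
  have hPU : P ≤ U := sup_le inf_le_left (le_trans hMK hKU')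
  have hPclosed : IsClosed (P : Set G) := P.isClosed_of_isOpen hPopen
  have hPcomp : IsCompact (P : Set G) := hUcomp.of_isClosed_subset hPclosed hPU
  have hPconj : ∀ n ∈ N, ∀ p ∈ P, n * p * n⁻¹ ∈ P := by
    intro n hn p hp
    have hpset : p ∈ (V : Set G) * (M : Set G) := by
      rw [← Subgroup.mul_normal V M]
      exact hp
    obtain ⟨v, hv, m, hm, rfl⟩ := hpset
    have hvV : v ∈ V := hv
    have hvZN : v ∈ ZN := hvV.2
    have hm1 : n * v * n⁻¹ * v⁻¹ ∈ M := by
      have h2 : v * n⁻¹ * v⁻¹ * n⁻¹⁻¹ ∈ M := hvZN n⁻¹ (inv_mem hn)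
      have heq : n * v * n⁻¹ * v⁻¹ = n * (v * n⁻¹ * v⁻¹ * n⁻¹⁻¹) * n⁻¹ := by group
      rw [heq]
      exact hMnormal.conj_mem _ h2 n
    have hm2 : n * m * n⁻¹ ∈ M := hMnormal.conj_mem m hm n
    have heq : n * (v * m) * n⁻¹ = ((n * v * n⁻¹ * v⁻¹) * v) * (n * m * n⁻¹) := by group
    rw [heq]
    exact mul_mem (mul_mem ((le_sup_right : M ≤ P) hm1) ((le_sup_left : V ≤ P) hvV))
      ((le_sup_right : M ≤ P) hm2)
  -- the normal core of P is the required subgroup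
  refine ⟨P.normalCore, P.normalCore_normal, ?_, ?_, ?_⟩
  · -- compact
    have hcoreclosed : IsClosed (P.normalCore : Set G) := by
      have hset : (P.normalCore : Set G) = ⋂ b : G, (fun a => b * a * b⁻¹) ⁻¹' (P : Set G) := by
        ext a
        exact ⟨fun h => mem_iInter.2 fun b => h b, fun h b => mem_iInter.1 h b⟩
      rw [hset]
      exact isClosed_iInter fun b =>
        hPclosed.preimage ((continuous_const.mul continuous_id).mul continuous_const)
    exact hPcomp.of_isClosed_subset hcoreclosed P.normalCore_le
  · -- open
    obtain ⟨O₃, hO₃open, h1O₃, hO₃⟩ := tube_aux (y₀ := (1 : G))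
        (F := fun p : G × G => p.1 * p.2 * p.1⁻¹)
        (((continuous_fst.mul continuous_snd).mul continuous_fst.inv)) hC₁comp hPopen
        (fun c hc => by simpa using one_mem P)
    have hO₃core : O₃ ⊆ (P.normalCore : Set G) := by
      intro a ha
      set T'' : Set G := {a : G | ∀ c ∈ C₁, c * a * c⁻¹ ∈ (P : Set G)} with hT''def
      have hT''conj : ∀ n ∈ N, ∀ a ∈ T'', n * a * n⁻¹ ∈ T'' := by
        intro n hn a haT c hc
        have heq : c * (n * a * n⁻¹) * c⁻¹ =
            (c * n * c⁻¹) * (c * a * c⁻¹) * (c * n * c⁻¹)⁻¹ := by group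
        rw [heq]
        exact hPconj (c * n * c⁻¹) (hNn.conj_mem n hn c) _ (haT c hc)
      have hT''core : T'' ⊆ (P.normalCore : Set G) := by
        intro a haT
        show ∀ b : G, b * a * b⁻¹ ∈ P
        intro b
        obtain ⟨c, hc, hcb⟩ := covN b
        have heq : b * a * b⁻¹ = c * ((c⁻¹ * b) * a * (c⁻¹ * b)⁻¹) * c⁻¹ := by group
        rw [heq]
        exact hT''conj (c⁻¹ * b) hcb a haT c hc
      exact hT''core (fun c hc => hO₃ c hc a ha)
    exact Subgroup.isOpen_of_mem_nhds _
      (Filter.mem_of_superset (hO₃open.mem_nhds h1O₃) hO₃core)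
  · -- contained in O
    exact fun x hx => hUO (hPU (P.normalCore_le hx))
end

section
/- Let G and H be totally disconnected locally compact second countable groups and ψ : H → G a continuous injective homomorphism with ψ(H) normal and dense in G. Then for every compact open subgroup W of H, the image ψ(W) is commensurated in G, i.e., gψ(W)g⁻¹ ∼_c ψ(W) for all g ∈ G. -/
open Filter Set MeasureTheory Topology Pointwise Uniformity

/-- A locally compact topological group is complete in its (right) group uniformity. -/
private theorem aux_completeSpace (G : Type*) [Group G] [TopologicalSpace G] [IsTopologicalGroup G]
    [WeaklyLocallyCompactSpace G] :
    @CompleteSpace G (IsTopologicalGroup.rightUniformSpace G) := by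
  letI := IsTopologicalGroup.rightUniformSpace G
  constructor
  intro f hf
  obtain ⟨K, hK, hKmem⟩ := exists_compact_mem_nhds (1 : G)
  have hU : {p : G × G | p.2 / p.1 ∈ K} ∈ 𝓤 G := by
    rw [uniformity_eq_comap_nhds_one']
    simp only [div_eq_mul_inv]
    exact preimage_mem_comap hKmem
  obtain ⟨A, hA, B, hB, hAB⟩ := Filter.mem_prod_iff.mp (hf.2 hU)
  have hC : A ∩ B ∈ f := inter_mem hA hB
  obtain ⟨a, ha⟩ := hf.1.nonempty_of_mem hC
  have hsub : A ∩ B ⊆ (fun k => k * a) '' K := by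
    intro y hy
    refine ⟨y / a, hAB (Set.mk_mem_prod ha.1 hy.2), ?_⟩
    simp
  have hKa : IsCompact ((fun k => k * a) '' K) := hK.image (continuous_mul_right a)
  obtain ⟨x, -, hx⟩ :=
    hKa.isComplete f hf (le_principal_iff.mpr (mem_of_superset hC hsub))
  exact ⟨x, hx⟩

/-- A locally compact second countable T1 topological group is Polish. -/
private theorem aux_polish (G : Type*) [Group G] [TopologicalSpace G] [IsTopologicalGroup G]
    [LocallyCompactSpace G] [SecondCountableTopology G] [T1Space G] : PolishSpace G := by
  letI := IsTopologicalGroup.rightUniformSpace G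
  haveI : CompleteSpace G := aux_completeSpace G
  haveI : (𝓤 G).IsCountablyGenerated := by
    rw [uniformity_eq_comap_nhds_one']
    exact Filter.comap.isCountablyGenerated _ _
  infer_instance

/-- Automatic continuity: a Borel measurable homomorphism from a locally compact second
countable group to a second countable group is continuous. -/
private theorem aux_continuous {G H : Type*}
    [Group G] [TopologicalSpace G] [IsTopologicalGroup G] [LocallyCompactSpace G]
    [T2Space G] [SecondCountableTopology G] [MeasurableSpace G] [BorelSpace G]
    [Group H] [TopologicalSpace H] [IsTopologicalGroup H] [SecondCountableTopology H]
    [MeasurableSpace H] [BorelSpace H]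
    (f : G →* H) (hf : Measurable f) : Continuous f := by
  apply continuous_of_continuousAt_one f
  rw [ContinuousAt, map_one, Filter.tendsto_def]
  intro V hV
  -- find an open neighborhood `W` of `1` with `W / W ⊆ V`
  obtain ⟨s, hs, t, ht, hst⟩ :
      ∃ s ∈ 𝓝 (1 : H), ∃ t ∈ 𝓝 (1 : H),
        s ×ˢ t ⊆ (fun p : H × H => p.1 / p.2) ⁻¹' V := by
    have hdiv : Tendsto (fun p : H × H => p.1 / p.2) (𝓝 1 ×ˢ 𝓝 1) (𝓝 1) := by
      rw [← nhds_prod_eq]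
      simpa using continuous_div'.tendsto ((1 : H), (1 : H))
    exact Filter.mem_prod_iff.mp (hdiv hV)
  set W : Set H := interior (s ∩ t) with hWdef
  have hWo : IsOpen W := isOpen_interior
  have hW1 : (1 : H) ∈ W := mem_interior_iff_mem_nhds.mpr (inter_mem hs ht)
  have hWV : ∀ x ∈ W, ∀ y ∈ W, x / y ∈ V := fun x hx y hy =>
    hst (Set.mk_mem_prod (interior_subset hx).1 (interior_subset hy).2)
  obtain ⟨D, hDc, hDd⟩ := TopologicalSpace.exists_countable_dense H
  -- countably many right translates of `W` cover `H`
  have hcover : ∀ x : G, ∃ d ∈ D, f x ∈ W * {d} := by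
    intro x
    have hO : IsOpen (W⁻¹ * {f x}) := hWo.inv.mul_right
    have hOne : (W⁻¹ * {f x}).Nonempty :=
      ⟨1⁻¹ * f x, Set.mul_mem_mul (Set.inv_mem_inv.mpr hW1) rfl⟩
    obtain ⟨d, hdD, hdO⟩ := hDd.exists_mem_open hO hOne
    obtain ⟨w, hw, y, hy, hwd⟩ := hdO
    rw [Set.mem_singleton_iff] at hy
    subst hy
    rw [Set.mem_inv] at hw
    refine ⟨d, hdD, Set.mem_mul.mpr ⟨w⁻¹, hw, d, rfl, ?_⟩⟩
    rw [← hwd]; group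
  -- one of the translates has preimage of positive Haar measure
  let μ : Measure G := Measure.haar
  have hmeas : ∀ d : H, MeasurableSet (f ⁻¹' (W * {d})) := fun d =>
    hf (hWo.mul_right.measurableSet)
  have hpos : ∃ d ∈ D, μ (f ⁻¹' (W * {d})) ≠ 0 := by
    by_contra hcon
    push_neg at hcon
    have h0 : μ (⋃ d ∈ D, f ⁻¹' (W * {d})) = 0 :=
      (measure_biUnion_null_iff hDc).mpr hcon
    have huniv : (⋃ d ∈ D, f ⁻¹' (W * {d})) = Set.univ := by
      ext x
      simp only [Set.mem_iUnion, Set.mem_univ, iff_true, Set.mem_preimage]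
      obtain ⟨d, hd, hxd⟩ := hcover x
      exact ⟨d, hd, hxd⟩
    rw [huniv] at h0
    exact isOpen_univ.measure_ne_zero μ Set.univ_nonempty h0
  obtain ⟨d, hdD, hdpos⟩ := hpos
  -- Steinhaus
  have hAA : f ⁻¹' (W * {d}) / f ⁻¹' (W * {d}) ∈ 𝓝 (1 : G) :=
    Measure.div_mem_nhds_one_of_haar_pos μ _ (hmeas d) (pos_iff_ne_zero.mpr hdpos)
  refine Filter.mem_of_superset hAA ?_
  rintro z hz
  obtain ⟨x, hx, y, hy, rfl⟩ := Set.mem_div.mp hz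
  obtain ⟨w₁, hw₁, d₁, hd₁, he₁⟩ := Set.mem_mul.mp hx
  obtain ⟨w₂, hw₂, d₂, hd₂, he₂⟩ := Set.mem_mul.mp hy
  rw [Set.mem_singleton_iff] at hd₁ hd₂
  subst hd₁; subst hd₂
  have : f (x / y) = w₁ / w₂ := by
    rw [map_div, ← he₁, ← he₂, mul_div_mul_right_eq_div]
  rw [Set.mem_preimage, this]
  exact hWV _ hw₁ _ hw₂

/-- In a topological group, an open subgroup has nonzero relative index in any
compact open subgroup. -/
private theorem aux_relIndex {H : Type*} [Group H] [TopologicalSpace H] [IsTopologicalGroup H]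
    {A B : Subgroup H} (hAo : IsOpen (A : Set H)) (hBc : IsCompact (B : Set H))
    (hBo : IsOpen (B : Set H)) : A.relIndex B ≠ 0 := by
  haveI : CompactSpace B := isCompact_iff_compactSpace.mp hBc
  haveI : Finite (B ⧸ A.subgroupOf B) := by
    refine Subgroup.quotient_finite_of_isOpen (A.subgroupOf B) ?_
    exact hAo.preimage continuous_subtype_val
  exact Subgroup.index_ne_zero_of_finite

/-- Let `ψ : H → G` be a continuous injective homomorphism of t.d.l.c.s.c. groups with
normal dense image. Then the image of every compact open subgroup of `H` is commensurated
in `G`. -/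
theorem image_of_compact_open_commensurated
    (G H : Type*) [Group G] [TopologicalSpace G] [IsTopologicalGroup G]
    [LocallyCompactSpace G] [TotallyDisconnectedSpace G] [SecondCountableTopology G]
    [Group H] [TopologicalSpace H] [IsTopologicalGroup H]
    [LocallyCompactSpace H] [TotallyDisconnectedSpace H] [SecondCountableTopology H]
    (ψ : H →* G) (hcont : Continuous ψ) (hinj : Function.Injective ψ)
    (hnormal : ((⊤ : Subgroup H).map ψ).Normal) (hdense : Dense (Set.range ψ)) :
    ∀ W : Subgroup H, IsCompact (W : Set H) → IsOpen (W : Set H) →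
      ∀ g : G, Subgroup.Commensurable ((W.map ψ).map (MulAut.conj g).toMonoidHom) (W.map ψ) := by
  haveI : T2Space G := inferInstance
  haveI : T2Space H := inferInstance
  borelize G H
  haveI : PolishSpace H := aux_polish H
  have hψemb : MeasurableEmbedding ψ := hcont.measurableEmbedding hinj
  -- the conjugation automorphisms of `H` induced by elements of `G`
  have hconj : ∀ (c : G) (h : H), ∃ h' : H, ψ h' = c * ψ h * c⁻¹ := by
    intro c h
    have hmem : ψ h ∈ (⊤ : Subgroup H).map ψ := ⟨h, trivial, rfl⟩
    obtain ⟨h', -, hh'⟩ := hnormal.conj_mem _ hmem c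
    exact ⟨h', hh'⟩
  choose φf hφf using hconj
  let φ : G → (H →* H) := fun c =>
    { toFun := φf c
      map_one' := hinj (by simp only [hφf, map_one]; group)
      map_mul' := fun a b => hinj (by simp only [hφf, map_mul]; group) }
  have hφ : ∀ c h, ψ (φ c h) = c * ψ h * c⁻¹ := hφf
  have hφmeas : ∀ c, Measurable (φ c) := by
    intro c
    rw [← hψemb.measurable_comp_iff]
    have heq : ψ ∘ (φ c) = fun h => c * ψ h * c⁻¹ := funext (hφ c)
    rw [heq]
    exact ((continuous_const.mul hcont).mul continuous_const).measurable
  have hφcont : ∀ c, Continuous (φ c) := fun c => aux_continuous (φ c) (hφmeas c)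
  have hφinv : ∀ (c : G) (h : H), φ c (φ c⁻¹ h) = h := by
    intro c h
    apply hinj
    rw [hφ, hφ]
    group
  have hφinv' : ∀ (c : G) (h : H), φ c⁻¹ (φ c h) = h := by
    intro c h
    apply hinj
    rw [hφ, hφ]
    group
  intro W hWc hWo g
  -- the image subgroup under the conjugation automorphism
  set W' : Subgroup H := W.map (φ g) with hW'def
  have hmapeq : (W.map ψ).map (MulAut.conj g).toMonoidHom = W'.map ψ := by
    rw [hW'def, Subgroup.map_map, Subgroup.map_map]
    congr 1
    ext h
    simp [hφ g h]
  have himgset : ((W' : Set H)) = (φ g⁻¹) ⁻¹' (W : Set H) := by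
    rw [hW'def, Subgroup.coe_map]
    ext x
    constructor
    · rintro ⟨w, hw, rfl⟩
      simpa [hφinv' g w] using hw
    · intro hx
      exact ⟨φ g⁻¹ x, hx, hφinv g x⟩
  have hW'c : IsCompact (W' : Set H) := by
    rw [hW'def, Subgroup.coe_map]
    exact hWc.image (hφcont g)
  have hW'o : IsOpen (W' : Set H) := by
    rw [himgset]
    exact hWo.preimage (hφcont g⁻¹)
  have hrel : ∀ A B : Subgroup H, (A.map ψ).relIndex (B.map ψ) = A.relIndex B := by
    intro A B
    rw [← Subgroup.relIndex_comap, Subgroup.comap_map_eq_self_of_injective hinj]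
  rw [hmapeq]
  constructor
  · rw [hrel]
    exact aux_relIndex hW'o hWc hWo
  · rw [hrel]
    exact aux_relIndex hWo hW'c hW'o
end

section
/- Let G and H be totally disconnected locally compact second countable groups and ψ : H → G a continuous injective homomorphism with ψ(H) normal and dense in G. Then for every compact open subgroup U of G, there exists a compact open subgroup W of H with ψ(W) normal in U. -/
open Set Filter Topology
open scoped Pointwise

/-- Van Dantzig's theorem: in a totally disconnected locally compact Hausdorff group,
every neighborhood of the identity contains a compact open subgroup. -/
theorem exists_compactOpen_subgroup_subset
    {H : Type*} [Group H] [TopologicalSpace H] [IsTopologicalGroup H]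
    [LocallyCompactSpace H] [TotallyDisconnectedSpace H] [T2Space H]
    {O : Set H} (hO : O ∈ 𝓝 (1 : H)) :
    ∃ V : Subgroup H, IsCompact (V : Set H) ∧ IsOpen (V : Set H) ∧ (V : Set H) ⊆ O := by
  -- a compact neighborhood of 1 inside O
  obtain ⟨K, hKnhds, hKO, hKc⟩ := LocallyCompactSpace.local_compact_nhds (1 : H) O hO
  -- a compact clopen neighborhood of 1 inside K
  obtain ⟨s, hs_clopen, h1s, hsK⟩ :=
    (loc_compact_Haus_tot_disc_of_zero_dim (H := H)).mem_nhds_iff.mp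
      (interior_mem_nhds.mpr hKnhds)
  have hs_compact : IsCompact s :=
    hKc.of_isClosed_subset hs_clopen.isClosed (hsK.trans interior_subset)
  -- find T ∈ 𝓝 1 with s * T ⊆ s
  have hmul : ∃ T ∈ 𝓝 (1 : H), s * T ⊆ s := by
    apply hs_compact.induction_on (p := fun S ↦ ∃ T ∈ 𝓝 (1 : H), S * T ⊆ s)
      ⟨Set.univ, by simp only [univ_mem, Set.empty_mul, Set.empty_subset, and_self]⟩
      (fun _ _ huv ⟨T, hT, mem⟩ ↦ ⟨T, hT, (Set.mul_subset_mul_right huv).trans mem⟩)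
      (fun A B ⟨T₁, hT₁, mem1⟩ ⟨T₂, hT₂, mem2⟩ ↦ ⟨T₁ ∩ T₂, inter_mem hT₁ hT₂, by
        rw [Set.union_mul]
        exact Set.union_subset
          ((Set.mul_subset_mul_left Set.inter_subset_left).trans mem1)
          ((Set.mul_subset_mul_left Set.inter_subset_right).trans mem2)⟩)
    intro x memW
    have : (x, 1) ∈ (fun p : H × H ↦ p.1 * p.2) ⁻¹' s := by simp [memW]
    rcases isOpen_prod_iff.mp (continuous_mul.isOpen_preimage s hs_clopen.2) x 1 this with
      ⟨Uo, Vo, Uopen, Vopen, xmemU, onememV, prodsub⟩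
    have h6 : Uo * Vo ⊆ s :=
      Set.mul_subset_iff.mpr fun _ hx _ hy ↦ prodsub (Set.mk_mem_prod hx hy)
    exact ⟨Uo ∩ s, ⟨Uo, Uopen.mem_nhds xmemU, s, fun _ a ↦ a, rfl⟩,
      Vo, Vopen.mem_nhds onememV, fun _ a ↦ h6 ((Set.mul_subset_mul_right Set.inter_subset_left) a)⟩
  obtain ⟨T, hTmem, hTmul⟩ := hmul
  obtain ⟨Uo, hUoT, hUoOpen, hUo1⟩ := mem_nhds_iff.mp hTmem
  set Vo : Set H := Uo ∩ Uo⁻¹ with hVo_def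
  have hVoOpen : IsOpen Vo := hUoOpen.inter hUoOpen.inv
  have hVo1 : (1 : H) ∈ Vo := ⟨hUo1, by simpa using hUo1⟩
  have hVoinv : Vo⁻¹ = Vo := by
    ext x
    simp only [hVo_def, Set.mem_inv, Set.mem_inter_iff]
    constructor <;> rintro ⟨h1, h2⟩ <;> exact ⟨by simpa using h2, by simpa using h1⟩
  have hVoT : Vo ⊆ T := fun x hx ↦ hUoT hx.1
  have hsVo : s * Vo ⊆ s := fun x hx ↦ by
    obtain ⟨a, ha, b, hb, rfl⟩ := hx
    exact hTmul (Set.mul_mem_mul ha (hVoT hb))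
  -- the subgroup generated by Vo
  let S : Subgroup H :=
    { carrier := ⋃ n, Vo ^ (n + 1)
      mul_mem' := fun ha hb ↦ by
        rcases Set.mem_iUnion.mp ha with ⟨k, hk⟩
        rcases Set.mem_iUnion.mp hb with ⟨l, hl⟩
        apply Set.mem_iUnion.mpr
        use k + 1 + l
        rw [add_assoc, pow_add]
        exact Set.mul_mem_mul hk hl
      one_mem' := Set.mem_iUnion.mpr ⟨0, by simpa using hVo1⟩
      inv_mem' := fun ha ↦ by
        rcases Set.mem_iUnion.mp ha with ⟨k, hk⟩
        apply Set.mem_iUnion.mpr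
        use k
        rw [← hVoinv]
        simpa only [inv_pow, Set.mem_inv, inv_inv] using hk }
  have hSopen : IsOpen (S : Set H) := by
    refine isOpen_iUnion fun n ↦ ?_
    rw [pow_succ]
    exact hVoOpen.mul_left
  have mulVpow : ∀ n : ℕ, s * Vo ^ (n + 1) ⊆ s := by
    intro n
    induction' n with n ih
    · simpa using hsVo
    · rw [pow_succ, ← mul_assoc]
      exact (Set.mul_subset_mul_right ih).trans hsVo
  have hSsub : (S : Set H) ⊆ s := by
    refine Set.iUnion_subset fun n x hx ↦ mulVpow n ?_
    exact ⟨1, h1s, x, hx, one_mul x⟩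
  have hSclosed : IsClosed (S : Set H) := S.isClosed_of_isOpen hSopen
  exact ⟨S, hs_compact.of_isClosed_subset hSclosed hSsub, hSopen,
    hSsub.trans (hsK.trans (interior_subset.trans hKO))⟩

/-- Let `ψ : H → G` be a continuous injective homomorphism of t.d.l.c.s.c. groups with
normal dense image. Then for every compact open subgroup `U` of `G` there is a compact
open subgroup `W` of `H` with `ψ(W)` normal in `U`. -/
theorem exists_image_normal_in_compact_open
    (G H : Type*) [Group G] [TopologicalSpace G] [IsTopologicalGroup G]
    [LocallyCompactSpace G] [TotallyDisconnectedSpace G] [SecondCountableTopology G]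
    [Group H] [TopologicalSpace H] [IsTopologicalGroup H]
    [LocallyCompactSpace H] [TotallyDisconnectedSpace H] [SecondCountableTopology H]
    (ψ : H →* G) (hcont : Continuous ψ) (hinj : Function.Injective ψ)
    (hnormal : ((⊤ : Subgroup H).map ψ).Normal) (hdense : Dense (Set.range ψ)) :
    ∀ U : Subgroup G, IsCompact (U : Set G) → IsOpen (U : Set G) →
      ∃ W : Subgroup H, IsCompact (W : Set H) ∧ IsOpen (W : Set H) ∧
        W.map ψ ≤ U ∧ ∀ u ∈ U, ∀ x ∈ W.map ψ, u * x * u⁻¹ ∈ W.map ψ := by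
  haveI : T2Space G := IsTopologicalGroup.t2Space_iff_one_closed.mpr isClosed_singleton
  haveI : T2Space H := IsTopologicalGroup.t2Space_iff_one_closed.mpr isClosed_singleton
  -- Step 1: for every g : G, the abstract conjugation automorphism of H is continuous.
  have key : ∀ g : G, ∃ θ : H → H, (∀ h, ψ (θ h) = g * ψ h * g⁻¹) ∧ Continuous θ := by
    intro g
    -- the graph of the conjugation map, as a closed subgroup of H × H
    let Γ : Subgroup (H × H) :=
      { carrier := {p : H × H | ψ p.2 = g * ψ p.1 * g⁻¹}
        one_mem' := by simp
        mul_mem' := by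
          rintro p q hp hq
          have hp' : ψ p.2 = g * ψ p.1 * g⁻¹ := hp
          have hq' : ψ q.2 = g * ψ q.1 * g⁻¹ := hq
          show ψ (p.2 * q.2) = g * ψ (p.1 * q.1) * g⁻¹
          rw [map_mul, map_mul, hp', hq']
          group
        inv_mem' := by
          intro p hp
          have hp' : ψ p.2 = g * ψ p.1 * g⁻¹ := hp
          show ψ p.2⁻¹ = g * ψ p.1⁻¹ * g⁻¹
          rw [map_inv, map_inv, hp']
          group }
    have hΓclosed : IsClosed (Γ : Set (H × H)) :=
      isClosed_eq (hcont.comp continuous_snd)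
        (((continuous_const.mul (hcont.comp continuous_fst)).mul continuous_const))
    haveI : LocallyCompactSpace Γ := hΓclosed.locallyCompactSpace
    haveI : SecondCountableTopology Γ := inferInstanceAs (SecondCountableTopology (↥(Γ : Set (H × H))))
    let π : Γ →* H := (MonoidHom.fst H H).comp Γ.subtype
    have hπc : Continuous π := continuous_fst.comp continuous_subtype_val
    have hπsurj : Function.Surjective π := by
      intro h
      have h1 : ψ h ∈ (⊤ : Subgroup H).map ψ := ⟨h, trivial, rfl⟩
      obtain ⟨h', -, hh'⟩ := hnormal.conj_mem (ψ h) h1 g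
      exact ⟨⟨(h, h'), show ψ h' = g * ψ h * g⁻¹ from hh'⟩, rfl⟩
    have hπinj : Function.Injective π := by
      rintro ⟨⟨a, b⟩, hab⟩ ⟨⟨c, d⟩, hcd⟩ h
      have h1 : a = c := h
      subst h1
      have hab' : ψ b = g * ψ a * g⁻¹ := hab
      have hcd' : ψ d = g * ψ a * g⁻¹ := hcd
      have : b = d := hinj (hab'.trans hcd'.symm)
      subst this
      rfl
    let e : Γ ≃ₜ H := Equiv.toHomeomorphOfContinuousOpen
      (Equiv.ofBijective π ⟨hπinj, hπsurj⟩) hπc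
      (π.isOpenMap_of_sigmaCompact hπsurj hπc)
    refine ⟨fun h ↦ (((e.symm h) : Γ) : H × H).2, fun h ↦ ?_,
      continuous_snd.comp (continuous_subtype_val.comp e.symm.continuous)⟩
    have h1 : (((e.symm h) : Γ) : H × H) ∈ Γ := (e.symm h).2
    have h2 : (((e.symm h) : Γ) : H × H).1 = h := e.apply_symm_apply h
    have h1' : ψ (((e.symm h) : Γ) : H × H).2 = g * ψ (((e.symm h) : Γ) : H × H).1 * g⁻¹ := h1
    rw [h1', h2]
  choose θ hψθ hθc using key
  -- basic properties of θ
  have hθcomp : ∀ g g' h, θ g (θ g' h) = θ (g * g') h := fun g g' h ↦ hinj (by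
    rw [hψθ, hψθ, hψθ]; group)
  have hθone : ∀ h, θ 1 h = h := fun h ↦ hinj (by rw [hψθ]; group)
  have hθinvcomp : ∀ g h, θ g (θ g⁻¹ h) = h := fun g h ↦ by
    rw [hθcomp, mul_inv_cancel, hθone]
  have hθcompinv : ∀ g h, θ g⁻¹ (θ g h) = h := fun g h ↦ by
    rw [hθcomp, inv_mul_cancel, hθone]
  have himage : ∀ (g : G) (s : Set H), θ g '' s = θ g⁻¹ ⁻¹' s := by
    intro g s
    ext x
    constructor
    · rintro ⟨y, hy, rfl⟩
      simpa [hθcompinv] using hy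
    · intro hx
      exact ⟨θ g⁻¹ x, hx, hθinvcomp g x⟩
  have hθ1 : ∀ g : G, θ g 1 = 1 := fun g ↦ hinj (by rw [hψθ]; simp)
  intro U hUc hUo
  -- a compact open subgroup V of H with ψ(V) ⊆ U
  have hpre : ψ ⁻¹' (U : Set G) ∈ 𝓝 (1 : H) :=
    (hUo.preimage hcont).mem_nhds (by simp [U.one_mem])
  obtain ⟨V, hVc, hVo, hVsub⟩ := exists_compactOpen_subgroup_subset hpre
  -- a countable neighborhood basis of compact open subgroups of H
  obtain ⟨b, hb⟩ := (𝓝 (1 : H)).exists_antitone_basis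
  choose Vseq hVseqC hVseqO hVseqSub using
    fun n ↦ exists_compactOpen_subgroup_subset (hb.toHasBasis.mem_of_mem (i := n) trivial)
  have hVfind : ∀ O ∈ 𝓝 (1 : H), ∃ n, (Vseq n : Set H) ⊆ O := by
    intro O hO
    obtain ⟨n, -, hn⟩ := hb.toHasBasis.mem_iff.mp hO
    exact ⟨n, (hVseqSub n).trans hn⟩
  -- Baire category on U
  haveI : CompactSpace (U : Set G) := isCompact_iff_compactSpace.mp hUc
  haveI : Nonempty (U : Set G) := ⟨⟨1, U.one_mem⟩⟩
  haveI : LocallyCompactSpace (U : Set G) := hUc.isClosed.locallyCompactSpace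
  set F : ℕ → Set (U : Set G) := fun n ↦
    {x | ∀ h ∈ (Vseq n : Set H), (x : G) * ψ h * (x : G)⁻¹ ∈ ψ '' (V : Set H)} with hF_def
  have hFclosed : ∀ n, IsClosed (F n) := by
    intro n
    have : F n = ⋂ h ∈ (Vseq n : Set H),
        (fun x : (U : Set G) ↦ (x : G) * ψ h * (x : G)⁻¹) ⁻¹' (ψ '' (V : Set H)) := by
      ext x; simp [hF_def]
    rw [this]
    refine isClosed_biInter fun h _ ↦ IsClosed.preimage ?_ (hVc.image hcont).isClosed
    exact (continuous_subtype_val.mul continuous_const).mul continuous_subtype_val.inv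
  have hFcover : ⋃ n, F n = univ := by
    refine Set.eq_univ_iff_forall.mpr fun x ↦ Set.mem_iUnion.mpr ?_
    have hOpen : (θ (x : G)) ⁻¹' (V : Set H) ∈ 𝓝 (1 : H) :=
      (hVo.preimage (hθc (x : G))).mem_nhds (by simp [hθ1, V.one_mem])
    obtain ⟨n, hn⟩ := hVfind _ hOpen
    refine ⟨n, fun h hh ↦ ?_⟩
    have : θ (x : G) h ∈ (V : Set H) := hn hh
    exact ⟨θ (x : G) h, this, hψθ (x : G) h⟩
  obtain ⟨n₀, x₀, hx₀⟩ := nonempty_interior_of_iUnion_of_closed hFclosed hFcover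
  -- translate the interior point to a neighborhood of 1
  set A' : Set G := Subtype.val '' interior (F n₀) with hA'_def
  have hA'open : IsOpen A' := hUo.isOpenMap_subtype_val _ isOpen_interior
  set g₀ : G := (x₀ : G) with hg₀_def
  have hg₀U : g₀ ∈ U := x₀.2
  have hg₀A : g₀ ∈ A' := ⟨x₀, hx₀, rfl⟩
  have hA' : ∀ a ∈ A', a ∈ U ∧
      ∀ h ∈ (Vseq n₀ : Set H), a * ψ h * a⁻¹ ∈ ψ '' (V : Set H) := by
    rintro a ⟨y, hy, rfl⟩
    exact ⟨y.2, interior_subset hy⟩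
  set B : Set G := (fun a : G ↦ g₀ * a) ⁻¹' A' with hB_def
  have hBopen : IsOpen B := hA'open.preimage (continuous_mul_left g₀)
  have h1B : (1 : G) ∈ B := by simpa [hB_def] using hg₀A
  obtain ⟨U₁, hU₁c, hU₁o, hU₁sub⟩ := exists_compactOpen_subgroup_subset (hBopen.mem_nhds h1B)
  -- the target compact open subgroup V* = θ_{g₀⁻¹}(V)
  set Vstar : Subgroup H := V.map (MonoidHom.mk' (θ g₀⁻¹) (fun a b ↦ hinj (by
    rw [hψθ, map_mul, map_mul, hψθ, hψθ]; group))) with hVstar_def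
  have hVstar_set : (Vstar : Set H) = θ g₀⁻¹ '' (V : Set H) := rfl
  have hVstarC : IsCompact (Vstar : Set H) := by
    rw [hVstar_set]; exact hVc.image (hθc g₀⁻¹)
  have hVstarO : IsOpen (Vstar : Set H) := by
    rw [hVstar_set, himage, inv_inv]
    exact hVo.preimage (hθc g₀)
  have hψVstar : ∀ w ∈ (Vstar : Set H), ψ w ∈ U := by
    intro w hw
    rw [hVstar_set] at hw
    obtain ⟨v, hv, rfl⟩ := hw
    rw [hψθ]
    exact U.mul_mem (U.mul_mem (U.inv_mem hg₀U) (hVsub hv)) (U.inv_mem (U.inv_mem hg₀U))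
  -- for u ∈ U₁, θ_u maps Vseq n₀ into V*
  have hstar : ∀ u ∈ (U₁ : Set G), ∀ h ∈ (Vseq n₀ : Set H), θ u h ∈ (Vstar : Set H) := by
    intro u hu h hh
    obtain ⟨-, h2⟩ := hA' (g₀ * u) (hU₁sub hu)
    obtain ⟨v, hv, hveq⟩ := h2 h hh
    have heq : θ g₀⁻¹ v = θ u h := hinj (by
      rw [hψθ, hψθ, hveq]; group)
    rw [hVstar_set]
    exact ⟨v, hv, heq⟩
  -- W₁ : subgroup generated by the θ_u-images of Vseq n₀, for u ∈ U₁
  set gens : Set H := ⋃ u ∈ (U₁ : Set G), θ u '' (Vseq n₀ : Set H) with hgens_def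
  set W₁ : Subgroup H := Subgroup.closure gens with hW₁_def
  have hgensVstar : gens ⊆ (Vstar : Set H) := by
    rintro x hx
    simp only [hgens_def, Set.mem_iUnion] at hx
    obtain ⟨u, hu, h, hh, rfl⟩ := hx
    exact hstar u hu h hh
  have hW₁leVstar : W₁ ≤ Vstar := (Subgroup.closure_le _).mpr hgensVstar
  have hVn₀leW₁ : (Vseq n₀ : Set H) ⊆ (W₁ : Set H) := by
    intro x hx
    apply Subgroup.subset_closure
    simp only [hgens_def, Set.mem_iUnion]
    exact ⟨1, U₁.one_mem, x, hx, hθone x⟩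
  have hW₁O : IsOpen (W₁ : Set H) :=
    Subgroup.isOpen_mono (fun x hx ↦ hVn₀leW₁ hx) (hVseqO n₀)
  have hW₁C : IsCompact (W₁ : Set H) :=
    hVstarC.of_isClosed_subset (W₁.isClosed_of_isOpen hW₁O) hW₁leVstar
  have hW₁inv : ∀ v ∈ (U₁ : Set G), ∀ x ∈ W₁, θ v x ∈ W₁ := by
    intro v hv x hx
    have hmap : W₁.map (MonoidHom.mk' (θ v) (fun a b ↦ hinj (by
        rw [hψθ, map_mul, map_mul, hψθ, hψθ]; group))) ≤ W₁ := by
      rw [hW₁_def, MonoidHom.map_closure]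
      refine (Subgroup.closure_le _).mpr ?_
      rintro y hy
      obtain ⟨x', hx', rfl⟩ := hy
      simp only [hgens_def, Set.mem_iUnion] at hx'
      obtain ⟨u, hu, h, hh, rfl⟩ := hx'
      apply Subgroup.subset_closure
      simp only [hgens_def, Set.mem_iUnion]
      exact ⟨v * u, U₁.mul_mem hv hu, h, hh, (hθcomp v u h).symm⟩
    exact hmap ⟨x, hx, rfl⟩
  -- cover U by finitely many translates of U₁
  have hcover : (U : Set G) ⊆ ⋃ a : (U : Set G), (fun g : G ↦ (a : G) * g) '' (U₁ : Set G) := by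
    intro u hu
    exact Set.mem_iUnion.mpr ⟨⟨u, hu⟩, 1, U₁.one_mem, mul_one u⟩
  obtain ⟨t, ht⟩ := hUc.elim_finite_subcover
    (fun a : (U : Set G) ↦ (fun g : G ↦ (a : G) * g) '' (U₁ : Set G))
    (fun a ↦ (isOpenMap_mul_left (a : G)) _ hU₁o) hcover
  have hdecomp : ∀ u ∈ (U : Set G), ∃ a ∈ t, ∃ v ∈ (U₁ : Set G), u = (a : G) * v := by
    intro u hu
    obtain ⟨a, ha⟩ := Set.mem_iUnion.mp (ht hu)
    simp only [Set.mem_iUnion, exists_prop] at ha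
    obtain ⟨hat, v, hv, hveq⟩ := ha
    exact ⟨a, hat, v, hv, hveq.symm⟩
  obtain ⟨a₀, ha₀t, -, -, -⟩ := hdecomp 1 U.one_mem
  -- θ as a monoid hom, and images of W₁
  have θhom : ∀ g : G, ∃ f : H →* H, ∀ h, f h = θ g h := fun g ↦
    ⟨MonoidHom.mk' (θ g) (fun a b ↦ hinj (by rw [hψθ, map_mul, map_mul, hψθ, hψθ]; group)), fun _ ↦ rfl⟩
  choose θM hθM using θhom
  have hθMmap : ∀ (g : G) (S : Subgroup H), ((S.map (θM g)) : Set H) = θ g '' (S : Set H) := by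
    intro g S
    ext x
    simp only [Subgroup.coe_map, Set.mem_image]
    exact ⟨fun ⟨y, hy, he⟩ ↦ ⟨y, hy, by rw [← hθM g y]; exact he⟩,
      fun ⟨y, hy, he⟩ ↦ ⟨y, hy, by rw [hθM g y]; exact he⟩⟩
  -- the final subgroup W
  set W : Subgroup H := ⨅ a ∈ t, W₁.map (θM (a : G)) with hW_def
  have hWmem : ∀ x : H, x ∈ W ↔ ∀ a ∈ t, x ∈ W₁.map (θM (a : G)) := by
    intro x
    simp [hW_def, Subgroup.mem_iInf]
  have hWcoe : (W : Set H) = ⋂ a ∈ t, ((W₁.map (θM (a : G))) : Set H) := by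
    ext x
    simp only [SetLike.mem_coe, hWmem, Set.mem_iInter]
  have hWsub : (W : Set H) ⊆ θ a₀ '' (W₁ : Set H) := by
    intro x hx
    rw [← hθMmap]
    rw [hWcoe] at hx
    exact Set.mem_iInter₂.mp hx a₀ ha₀t
  have himgC : ∀ a : G, IsCompact (θ a '' (W₁ : Set H)) := fun a ↦ hW₁C.image (hθc a)
  have himgO : ∀ a : G, IsOpen (θ a '' (W₁ : Set H)) := fun a ↦ by
    rw [himage]; exact hW₁O.preimage (hθc a⁻¹)
  have hWclosed : IsClosed (W : Set H) := by
    rw [hWcoe]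
    refine isClosed_biInter fun a _ ↦ ?_
    rw [hθMmap]
    exact (himgC (a : G)).isClosed
  have hWC : IsCompact (W : Set H) := (himgC (a₀ : G)).of_isClosed_subset hWclosed hWsub
  have hWO : IsOpen (W : Set H) := by
    rw [hWcoe]
    refine Set.Finite.isOpen_biInter t.finite_toSet fun a _ ↦ ?_
    rw [hθMmap]
    exact himgO (a : G)
  -- W is invariant under all θ_u, u ∈ U
  have hWinv : ∀ u ∈ (U : Set G), ∀ x ∈ W, θ u x ∈ W := by
    intro u hu x hx
    rw [hWmem]
    intro a hat
    have haU : (a : G) ∈ U := a.2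
    have hmem : u⁻¹ * (a : G) ∈ (U : Set G) := U.mul_mem (U.inv_mem hu) haU
    obtain ⟨k, hkt, v, hv, hkv⟩ := hdecomp _ hmem
    -- u⁻¹ * a = k * v, so a * v⁻¹... rather: θ u x ∈ θ a '' W₁
    have hxk : x ∈ W₁.map (θM (k : G)) := (hWmem x).mp hx k hkt
    obtain ⟨w, hw, hweq⟩ := hxk
    rw [hθM] at hweq
    -- x = θ k w
    have hw' : θ v⁻¹ w ∈ W₁ := hW₁inv v⁻¹ (U₁.inv_mem hv) w hw
    refine ⟨θ v⁻¹ w, hw', ?_⟩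
    rw [hθM]
    -- θ a (θ v⁻¹ w) = θ (a * v⁻¹) w and θ u x = θ u (θ k w) = θ (u*k) w
    have h1 : θ (a : G) (θ v⁻¹ w) = θ ((a : G) * v⁻¹) w := hθcomp _ _ _
    have h2 : θ u x = θ (u * (k : G)) w := by rw [← hweq]; exact hθcomp _ _ _
    rw [h1, h2]
    congr 1
    -- a * v⁻¹ = u * k  from  u⁻¹ * a = k * v
    have : (a : G) = u * ((k : G) * v) := by
      rw [← hkv]; group
    rw [this]; group
  -- conclusion
  refine ⟨W, hWC, hWO, ?_, ?_⟩
  · rintro y ⟨x, hx, rfl⟩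
    obtain ⟨w, hw, rfl⟩ := hWsub hx
    rw [hψθ]
    exact U.mul_mem (U.mul_mem a₀.2 (hψVstar w (hW₁leVstar hw))) (U.inv_mem a₀.2)
  · rintro u hu x ⟨w, hw, rfl⟩
    exact ⟨θ u w, hWinv u hu w hw, hψθ u w⟩
end

section
/- Let U be a profinite group, B a closed normal subgroup such that U/B has dense quasi-centre, and A a closed normal subgroup of U that is open in B (so A ≤ B with B/A finite). Then U/A has dense quasi-centre. -/
/-- Preimage of the centralizer set of `↑g` in a quotient under `mk`. -/
lemma preimage_centralizer_mk {U : Type*} [Group U] (N : Subgroup U) [N.Normal] (g : U) :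
    (QuotientGroup.mk ⁻¹' ((Subgroup.centralizer {(g : U ⧸ N)} : Subgroup (U ⧸ N)) : Set (U ⧸ N)))
      = (fun u : U => (u * g)⁻¹ * (g * u)) ⁻¹' (N : Set U) := by
  ext u
  simp only [Set.mem_preimage, SetLike.mem_coe, Subgroup.mem_centralizer_singleton_iff]
  rw [show ((g : U ⧸ N) * (u : U ⧸ N)) = ((g * u : U) : U ⧸ N) from rfl,
    show ((u : U ⧸ N) * (g : U ⧸ N)) = ((u * g : U) : U ⧸ N) from rfl,
    QuotientGroup.eq]

/-- Let `U` be a profinite group, `B ⊴ U` closed with `U/B` having dense quasi-centre,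
and `A ⊴ U` closed with `A ≤ B` and `A` open in `B`. Then `U/A` has dense quasi-centre.
(The quasi-centre is the set of elements with open centralizer.) -/
theorem dense_quasiCentre_of_quotient
    (U : Type*) [Group U] [TopologicalSpace U] [IsTopologicalGroup U]
    [CompactSpace U] [TotallyDisconnectedSpace U]
    (B A : Subgroup U) [B.Normal] [A.Normal]
    (hBc : IsClosed (B : Set U)) (hAc : IsClosed (A : Set U)) (hAB : A ≤ B)
    (hAopen : ∃ O : Set U, IsOpen O ∧ (A : Set U) = O ∩ (B : Set U))
    (hQZ : Dense {x : U ⧸ B |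
      IsOpen ((Subgroup.centralizer {x} : Subgroup (U ⧸ B)) : Set (U ⧸ B))}) :
    Dense {x : U ⧸ A |
      IsOpen ((Subgroup.centralizer {x} : Subgroup (U ⧸ A)) : Set (U ⧸ A))} := by
  obtain ⟨O, hO, hAO⟩ := hAopen
  -- Key claim: if the centralizer of g mod B is open, so is the centralizer of g mod A.
  have key : ∀ g : U,
      IsOpen ((Subgroup.centralizer {(g : U ⧸ B)} : Subgroup (U ⧸ B)) : Set (U ⧸ B)) →
      IsOpen ((Subgroup.centralizer {(g : U ⧸ A)} : Subgroup (U ⧸ A)) : Set (U ⧸ A)) := by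
    intro g hg
    have hf : Continuous (fun u : U => (u * g)⁻¹ * (g * u)) := by continuity
    rw [← (QuotientGroup.isQuotientMap_mk A).isOpen_preimage, preimage_centralizer_mk]
    have hC : IsOpen ((fun u : U => (u * g)⁻¹ * (g * u)) ⁻¹' (B : Set U)) := by
      rw [← preimage_centralizer_mk]
      exact hg.preimage continuous_quot_mk
    rw [hAO, Set.preimage_inter]
    exact (hO.preimage hf).inter hC
  rw [dense_iff_inter_open]
  intro V hV hVne
  obtain ⟨v, hv⟩ := hVne
  obtain ⟨u, hu⟩ := QuotientGroup.mk_surjective v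
  have hW : IsOpen (QuotientGroup.mk ⁻¹' V : Set U) := hV.preimage continuous_quot_mk
  have hWB : IsOpen ((QuotientGroup.mk : U → U ⧸ B) '' (QuotientGroup.mk ⁻¹' V)) :=
    QuotientGroup.isOpenMap_coe _ hW
  have hne : ((QuotientGroup.mk : U → U ⧸ B) '' (QuotientGroup.mk ⁻¹' V)).Nonempty :=
    ⟨_, ⟨u, by simp [hu, hv], rfl⟩⟩
  obtain ⟨y, hy1, hy2⟩ := (dense_iff_inter_open.mp hQZ) _ hWB hne
  obtain ⟨w, hw1, hw2⟩ := hy1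
  exact ⟨(w : U ⧸ A), hw1, key w (hw2 ▸ hy2)⟩
end

section
/- Let U be a profinite group containing an infinite locally normal subgroup L belonging to the class [A]. Then U contains an infinite normal [A]-subgroup. -/
open Pointwise

lemma myNormal_iSup {G : Type*} [Group G] {ι : Sort*} (V : ι → Subgroup G)
    (h : ∀ i, (V i).Normal) : (⨆ i, V i).Normal := by
  constructor
  intro x hx g
  refine Subgroup.iSup_induction V (C := fun x => g * x * g⁻¹ ∈ ⨆ i, V i) hx
    (fun i y hy => ?_) (by simpa using one_mem _) (fun a b ha hb => ?_)
  · exact le_iSup V i ((h i).conj_mem y hy g)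
  · have h2 : g * (a * b) * g⁻¹ = (g * a * g⁻¹) * (g * b * g⁻¹) := by group
    show g * (a * b) * g⁻¹ ∈ ⨆ i, V i
    rw [h2]; exact mul_mem ha hb

lemma iSup_normal_carrier {G : Type*} [Group G] :
    ∀ (n : ℕ) (V : Fin n → Subgroup G), (∀ i, (V i).Normal) →
    ((⨆ i, V i : Subgroup G) : Set G) =
      {x : G | ∃ f : Fin n → G, (∀ i, f i ∈ V i) ∧ x = (List.ofFn f).prod} := by
  intro n
  induction n with
  | zero =>
    intro V _
    rw [iSup_of_empty]
    ext x
    simp only [Subgroup.coe_bot, Set.mem_singleton_iff, Set.mem_setOf_eq, List.ofFn_zero,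
      List.prod_nil]
    constructor
    · rintro rfl; exact ⟨Fin.elim0, fun i => i.elim0, rfl⟩
    · rintro ⟨f, _, rfl⟩; rfl
  | succ n ih =>
    intro V hV
    have hsplit : (⨆ i, V i) = V 0 ⊔ ⨆ i : Fin n, V i.succ := by
      apply le_antisymm
      · exact iSup_le (Fin.cases le_sup_left
          (fun i => le_trans (le_iSup (fun j : Fin n => V j.succ) i) le_sup_right))
      · exact sup_le (le_iSup V 0) (iSup_le fun i => le_iSup V i.succ)
    haveI : (⨆ i : Fin n, V i.succ).Normal := myNormal_iSup _ (fun i => hV i.succ)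
    haveI := hV 0
    rw [hsplit, Subgroup.mul_normal (V 0) _, ih (fun i => V i.succ) (fun i => hV i.succ)]
    ext x
    constructor
    · rintro ⟨a, ha, b, ⟨f', hf', rfl⟩, rfl⟩
      refine ⟨Fin.cons a f', fun i => ?_, ?_⟩
      · refine Fin.cases ?_ (fun j => ?_) i
        · simpa using ha
        · simpa using hf' j
      · rw [List.ofFn_succ]
        simp [Fin.cons_zero, Fin.cons_succ]
    · rintro ⟨f, hf, rfl⟩
      refine ⟨f 0, hf 0, (List.ofFn fun i : Fin n => f i.succ).prod,
        ⟨_, fun i => hf i.succ, rfl⟩, ?_⟩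
      rw [List.ofFn_succ]
      simp

lemma iSup_carrier_of_normalized {G : Type*} [Group G] (O : Subgroup G) (n : ℕ)
    (V : Fin n → Subgroup G) (hle : ∀ i, V i ≤ O)
    (hnorm : ∀ i, ∀ w ∈ O, ∀ v ∈ V i, w * v * w⁻¹ ∈ V i) :
    ((⨆ i, V i : Subgroup G) : Set G) =
      {x : G | ∃ f : Fin n → G, (∀ i, f i ∈ V i) ∧ x = (List.ofFn f).prod} := by
  set V' : Fin n → Subgroup O := fun i => (V i).subgroupOf O with hV'
  have hN : ∀ i, (V' i).Normal := fun i => by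
    constructor
    intro x hx g
    rw [Subgroup.mem_subgroupOf] at hx ⊢
    exact hnorm i g g.2 x hx
  have hmap : (⨆ i, V' i).map O.subtype = ⨆ i, V i := by
    rw [Subgroup.map_iSup]
    congr 1
    funext i
    rw [hV', Subgroup.subgroupOf_map_subtype, inf_eq_left.mpr (hle i)]
  ext x
  constructor
  · intro hx
    rw [← hmap] at hx
    obtain ⟨y, hy, rfl⟩ := hx
    rw [iSup_normal_carrier n V' hN] at hy
    obtain ⟨f', hf', rfl⟩ := hy
    refine ⟨fun i => (f' i : G), fun i => Subgroup.mem_subgroupOf.mp (hf' i), ?_⟩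
    show ((List.ofFn f').prod : G) = _
    have h1 := map_list_prod O.subtype (List.ofFn f')
    rw [List.map_ofFn] at h1
    exact h1
  · rintro ⟨f, hf, rfl⟩
    refine Subgroup.list_prod_mem _ (fun x hx => ?_)
    rw [List.mem_ofFn] at hx
    obtain ⟨i, rfl⟩ := hx
    exact le_iSup V i (hf i)



/-- `P` behaves like membership in the class `[A]` for closed subgroups of a profinite
group `U`: it is invariant under conjugation, closed under passing to closed normal
subgroups, and closed under finite products of normal `P`-subgroups. -/
structure IsAClassOn (U : Type*) [Group U] [TopologicalSpace U]
    (P : Subgroup U → Prop) : Prop where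
  conj : ∀ L : Subgroup U, P L → ∀ u : U, P (L.map (MulAut.conj u).toMonoidHom)
  normal_sub : ∀ L : Subgroup U, P L → ∀ M : Subgroup U, IsClosed (M : Set U) → M ≤ L →
    (∀ l ∈ L, ∀ m ∈ M, l * m * l⁻¹ ∈ M) → P M
  prod : ∀ (W : Subgroup U) (n : ℕ) (V : Fin n → Subgroup U),
    (∀ i, P (V i)) → (∀ i, V i ≤ W) →
    (∀ i, ∀ w ∈ W, ∀ v ∈ V i, w * v * w⁻¹ ∈ V i) →
    ((W : Set U) = {x : U | ∃ f : Fin n → U, (∀ i, f i ∈ V i) ∧ x = (List.ofFn f).prod}) →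
    P W

/-- If a profinite group `U` contains an infinite locally normal `[A]`-subgroup, then `U`
contains an infinite normal `[A]`-subgroup. -/
theorem infinite_normal_A_subgroup_of_locally_normal
    (U : Type*) [Group U] [TopologicalSpace U] [IsTopologicalGroup U]
    [CompactSpace U] [TotallyDisconnectedSpace U]
    (P : Subgroup U → Prop) (hP : IsAClassOn U P)
    (L : Subgroup U) (hLclosed : IsClosed (L : Set U)) (hLinf : (L : Set U).Infinite)
    (hLlocnorm : IsOpen ((Subgroup.normalizer (L : Set U) : Subgroup U) : Set U)) (hLA : P L) :
    ∃ K : Subgroup U, IsClosed (K : Set U) ∧ (K : Set U).Infinite ∧ K.Normal ∧ P K := by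
  -- Step 1: an open normal subgroup W inside the normalizer of L
  have hNclopen : IsClopen ((Subgroup.normalizer (L : Set U) : Subgroup U) : Set U) :=
    ⟨Subgroup.isClosed_of_isOpen _ hLlocnorm, hLlocnorm⟩
  obtain ⟨O, hO⟩ := IsTopologicalGroup.exist_openNormalSubgroup_sub_clopen_nhds_of_one
    hNclopen (one_mem _)
  set W : Subgroup U := O.toOpenSubgroup.toSubgroup with hWdef
  have hWnorm : W.Normal := O.isNormal'
  have hWopen : IsOpen (W : Set U) := O.toOpenSubgroup.isOpen'
  have hWclosed : IsClosed (W : Set U) := Subgroup.isClosed_of_isOpen _ hWopen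
  have hWle : W ≤ Subgroup.normalizer (L : Set U) := fun x hx => hO hx
  have hWconjL : ∀ w ∈ W, ∀ l ∈ L, w * l * w⁻¹ ∈ L := fun w hw l hl =>
    (Subgroup.mem_normalizer_iff.mp (hWle hw) l).mp hl
  -- Step 2: M = L ⊓ W
  set M : Subgroup U := L ⊓ W with hMdef
  have hMclosed : IsClosed (M : Set U) := hLclosed.inter hWclosed
  have hMP : P M := by
    refine hP.normal_sub L hLA M hMclosed inf_le_left (fun l hl m hm => ?_)
    rw [hMdef, Subgroup.mem_inf] at hm ⊢
    exact ⟨mul_mem (mul_mem hl hm.1) (inv_mem hl), hWnorm.conj_mem m hm.2 l⟩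
  have hWnormM : ∀ w ∈ W, ∀ m ∈ M, w * m * w⁻¹ ∈ M := by
    intro w hw m hm
    rw [hMdef, Subgroup.mem_inf] at hm ⊢
    exact ⟨hWconjL w hw m hm.1, mul_mem (mul_mem hw hm.2) (inv_mem hw)⟩
  -- Step 3: M is infinite
  have hMinf : (M : Set U).Infinite := by
    intro hMfin
    have hLcomp : IsCompact (L : Set U) := hLclosed.isCompact
    have hcover : (L : Set U) ⊆ ⋃ g : (L : Set U), (g : U) • (W : Set U) := by
      intro x hx
      refine Set.mem_iUnion.mpr ⟨⟨x, hx⟩, ?_⟩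
      rw [Set.mem_smul_set_iff_inv_smul_mem, smul_eq_mul, inv_mul_cancel]
      exact one_mem W
    obtain ⟨t, ht⟩ := hLcomp.elim_finite_subcover
      (fun g : (L : Set U) => (g : U) • (W : Set U)) (fun g => hWopen.smul (g : U)) hcover
    have hsub : (L : Set U) ⊆ ⋃ g ∈ t, (g : U) • (M : Set U) := by
      intro x hx
      obtain ⟨g, hgt, hgx⟩ := Set.mem_iUnion₂.mp (ht hx)
      rw [Set.mem_smul_set_iff_inv_smul_mem, smul_eq_mul] at hgx
      refine Set.mem_iUnion₂.mpr ⟨g, hgt, ?_⟩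
      rw [Set.mem_smul_set_iff_inv_smul_mem, smul_eq_mul, hMdef]
      exact Subgroup.mem_inf.mpr ⟨mul_mem (inv_mem g.2) hx, hgx⟩
    exact hLinf ((Set.Finite.biUnion t.finite_toSet
      (fun g _ => hMfin.smul_set)).subset hsub)
  -- Step 4: finitely many coset representatives covering U
  obtain ⟨t2, ht2⟩ := isCompact_univ.elim_finite_subcover (fun u : U => u • (W : Set U))
    (fun u => hWopen.smul u) (by
      intro x _
      refine Set.mem_iUnion.mpr ⟨x, ?_⟩
      rw [Set.mem_smul_set_iff_inv_smul_mem, smul_eq_mul, inv_mul_cancel]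
      exact one_mem W)
  set n : ℕ := t2.card with hndef
  set u : Fin n → U := fun i => (t2.equivFin.symm i : U) with hudef
  have hcov : ∀ g : U, ∃ j : Fin n, (u j)⁻¹ * g ∈ W := by
    intro g
    obtain ⟨v, hvt, hgv⟩ := Set.mem_iUnion₂.mp (ht2 (Set.mem_univ g))
    refine ⟨t2.equivFin ⟨v, hvt⟩, ?_⟩
    rw [Set.mem_smul_set_iff_inv_smul_mem, smul_eq_mul] at hgv
    rw [hudef]
    simpa using hgv
  have hn : 0 < n := by
    obtain ⟨j, _⟩ := hcov 1
    exact j.pos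
  -- Step 5: the conjugates of M
  set V : Fin n → Subgroup U := fun i => M.map (MulAut.conj (u i)).toMonoidHom with hVdef
  have memV : ∀ (g : U) (x : U), x ∈ M.map (MulAut.conj g).toMonoidHom ↔
      ∃ m ∈ M, g * m * g⁻¹ = x := by
    intro g x
    simp [Subgroup.mem_map, MulAut.conj_apply]
  have hVleW : ∀ i, V i ≤ W := by
    intro i x hx
    obtain ⟨m, hm, rfl⟩ := (memV _ _).mp hx
    exact hWnorm.conj_mem m hm.2 (u i)
  have hWnormV : ∀ i, ∀ w ∈ W, ∀ v ∈ V i, w * v * w⁻¹ ∈ V i := by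
    intro i w hw v hv
    obtain ⟨m, hm, rfl⟩ := (memV _ _).mp hv
    have hw' : (u i)⁻¹ * w * (u i) ∈ W := by
      have h3 := hWnorm.conj_mem w hw (u i)⁻¹
      rwa [inv_inv] at h3
    refine (memV _ _).mpr ⟨((u i)⁻¹ * w * (u i)) * m * ((u i)⁻¹ * w * (u i))⁻¹,
      hWnormM _ hw' m hm, ?_⟩
    group
  -- Step 6: K is the join of the conjugates
  set K : Subgroup U := ⨆ i, V i with hKdef
  have hVleK : ∀ i, V i ≤ K := fun i => le_iSup V i
  have hKleW : K ≤ W := iSup_le hVleW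
  have hKcarrier : (K : Set U) =
      {x : U | ∃ f : Fin n → U, (∀ i, f i ∈ V i) ∧ x = (List.ofFn f).prod} :=
    iSup_carrier_of_normalized W n V hVleW hWnormV
  refine ⟨K, ?_, ?_, ?_, ?_⟩
  -- closed
  · have hVclosed : ∀ i, IsClosed ((V i : Subgroup U) : Set U) := by
      intro i
      have h4 : ((V i : Subgroup U) : Set U) = (fun x => u i * x * (u i)⁻¹) '' (M : Set U) := by
        rw [hVdef, Subgroup.coe_map]
        rfl
      rw [h4]
      exact (((Homeomorph.mulLeft (u i)).trans (Homeomorph.mulRight (u i)⁻¹)).isClosedMap)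
        _ hMclosed
    have hScomp : IsCompact (Set.univ.pi (fun i => ((V i : Subgroup U) : Set U))) :=
      isCompact_univ_pi (fun i => (hVclosed i).isCompact)
    have himg : (K : Set U) =
        (fun f : Fin n → U => (List.ofFn f).prod) ''
          (Set.univ.pi (fun i => ((V i : Subgroup U) : Set U))) := by
      rw [hKcarrier]
      ext x
      simp only [Set.mem_setOf_eq, Set.mem_image, Set.mem_pi, Set.mem_univ, true_implies,
        SetLike.mem_coe]
      constructor
      · rintro ⟨f, hf, rfl⟩; exact ⟨f, hf, rfl⟩
      · rintro ⟨f, hf, rfl⟩; exact ⟨f, hf, rfl⟩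
    rw [himg]
    have hcont : Continuous (fun f : Fin n → U => (List.ofFn f).prod) := by
      simp only [List.ofFn_eq_map]
      exact continuous_list_prod _ (fun i _ => continuous_apply i)
    exact (hScomp.image hcont).isClosed
  -- infinite
  · have i0 : Fin n := ⟨0, hn⟩
    have hVinf : ((V i0 : Subgroup U) : Set U).Infinite := by
      have h5 : ((V i0 : Subgroup U) : Set U) =
          ((MulAut.conj (u i0)).toMonoidHom : U → U) '' (M : Set U) := by
        rw [hVdef, Subgroup.coe_map]
      rw [h5]
      exact hMinf.image ((MulAut.conj (u i0)).injective.injOn)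
    exact hVinf.mono (SetLike.coe_subset_coe.mpr (hVleK i0))
  -- normal
  · constructor
    intro x hx g
    refine Subgroup.iSup_induction V (C := fun x => g * x * g⁻¹ ∈ K) hx
      (fun i y hy => ?_) (by simpa using one_mem K) (fun a b ha hb => ?_)
    · obtain ⟨m, hm, rfl⟩ := (memV _ _).mp hy
      obtain ⟨j, hj⟩ := hcov (g * u i)
      have h6 : g * (u i * m * (u i)⁻¹) * g⁻¹ =
          u j * (((u j)⁻¹ * (g * u i)) * m * ((u j)⁻¹ * (g * u i))⁻¹) * (u j)⁻¹ := by
        group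
      rw [h6]
      exact hVleK j ((memV (u j) _).mpr ⟨_, hWnormM _ hj m hm, rfl⟩)
    · have h7 : g * (a * b) * g⁻¹ = (g * a * g⁻¹) * (g * b * g⁻¹) := by group
      show g * (a * b) * g⁻¹ ∈ K
      rw [h7]
      exact mul_mem ha hb
  -- P K
  · exact hP.prod K n V (fun i => hP.conj M hMP (u i)) hVleK
      (fun i w hw v hv => hWnormV i w (hKleW hw) v hv) hKcarrier
end

section
/- Let G be a compactly generated t.d.l.c. group acting vertex transitively on a connected locally finite graph Γ with compact open vertex stabilizers, and let H ⊴ G be a closed normal subgroup. Let σ be the G-congruence on VΓ induced by the H-orbits. Then the quotient graph Γ/σ is connected, locally finite, vertex transitive under the induced G/H-action, deg(Γ/σ) ≤ deg(Γ), and each vertex stabilizer in G/H is compact and open. -/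
/-- The quotient of a simple graph by an equivalence relation on its vertices: two blocks
are adjacent when they are distinct and contain adjacent representatives. -/
def quotientGraph {V : Type*} (Γ : SimpleGraph V) (s : Setoid V) :
    SimpleGraph (Quotient s) where
  Adj b c := b ≠ c ∧ ∃ v w : V, Quotient.mk s v = b ∧ Quotient.mk s w = c ∧ Γ.Adj v w
  symm := by
    refine ⟨?_⟩
    rintro b c ⟨hne, v, w, hv, hw, hadj⟩
    exact ⟨hne.symm, w, v, hw, hv, hadj.symm⟩
  loopless := by
    refine ⟨?_⟩
    rintro b ⟨hne, -⟩
    exact hne rfl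

/-- Quotient of a Cayley–Abels graph by the orbits of a closed normal subgroup: the
quotient graph is connected, locally finite, vertex transitive under the induced `G/H`
action, has degree at most `deg(Γ)`, and the block stabilizers in `G/H` are compact and
open. -/
theorem quotient_cayley_abels_graph
    (G : Type*) [Group G] [TopologicalSpace G] [IsTopologicalGroup G]
    [LocallyCompactSpace G] [TotallyDisconnectedSpace G]
    (hcg : ∃ X : Set G, IsCompact X ∧ Subgroup.closure X = ⊤)
    (V : Type*) (Γ : SimpleGraph V) [MulAction G V]
    -- G acts by graph automorphisms
    (hauto : ∀ (g : G) (v w : V), Γ.Adj v w ↔ Γ.Adj (g • v) (g • w))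
    -- vertex transitively
    (htrans : ∀ v w : V, ∃ g : G, g • v = w)
    -- with compact open stabilizers
    (hstab : ∀ v : V, IsCompact ((MulAction.stabilizer G v : Subgroup G) : Set G) ∧
      IsOpen ((MulAction.stabilizer G v : Subgroup G) : Set G))
    -- on a connected locally finite graph
    (hconn : Γ.Connected) (hlf : ∀ v : V, (Γ.neighborSet v).Finite)
    -- H is a closed normal subgroup
    (H : Subgroup G) [H.Normal] (hHc : IsClosed (H : Set G)) :
    -- σ is the G-congruence induced by the H-orbits
    ∀ s : Setoid V, s = MulAction.orbitRel H V →
      (quotientGraph Γ s).Connected ∧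
      (∀ b : Quotient s, {c : Quotient s | (quotientGraph Γ s).Adj b c}.Finite) ∧
      -- G/H acts (vertex) transitively on the blocks
      (∀ v w : V, ∃ g : G, Quotient.mk s (g • v) = Quotient.mk s w) ∧
      -- deg(Γ/σ) ≤ deg(Γ)
      (∀ v : V, {c : Quotient s | (quotientGraph Γ s).Adj (Quotient.mk s v) c}.ncard ≤
        (Γ.neighborSet v).ncard) ∧
      -- block stabilizers in G/H are compact and open
      (∀ v : V,
        IsCompact ((QuotientGroup.mk (s := H)) ''
          {g : G | Quotient.mk s (g • v) = Quotient.mk s v}) ∧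
        IsOpen ((QuotientGroup.mk (s := H)) ''
          {g : G | Quotient.mk s (g • v) = Quotient.mk s v})) := by
  classical
  rintro s rfl
  set s := MulAction.orbitRel H V with hs
  open Pointwise in
  -- blocks are invariant under H
  have hmk : ∀ (h : H) (v : V), Quotient.mk s ((h : G) • v) = Quotient.mk s v := by
    intro h v
    exact Quotient.sound ⟨h, rfl⟩
  -- the neighbor blocks of the block of v are images of neighbors of v
  have hsub : ∀ v : V, {c : Quotient s | (quotientGraph Γ s).Adj (Quotient.mk s v) c} ⊆
      (Quotient.mk s) '' (Γ.neighborSet v) := by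
    intro v c hc
    obtain ⟨hne, v', w, hv', hw, hadj⟩ := hc
    obtain ⟨h, hh⟩ := Quotient.exact hv'
    have hh' : (h : G) • v = v' := hh
    refine ⟨(h : G)⁻¹ • w, ?_, ?_⟩
    · have := (hauto ((h : G)⁻¹) v' w).mp hadj
      rwa [← hh', inv_smul_smul] at this
    · rw [← hw]
      have := hmk h ((h : G)⁻¹ • w)
      rw [smul_inv_smul] at this
      exact this.symm
  -- reachability descends along walks
  have hreach : ∀ {v w : V}, Γ.Walk v w →
      (quotientGraph Γ s).Reachable (Quotient.mk s v) (Quotient.mk s w) := by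
    intro v w p
    induction p with
    | nil => exact SimpleGraph.Reachable.refl _
    | @cons u x y h p ih =>
      rcases eq_or_ne (Quotient.mk s u) (Quotient.mk s x) with he | hne
      · rwa [he]
      · have hadj : (quotientGraph Γ s).Adj (Quotient.mk s u) (Quotient.mk s x) :=
          ⟨hne, u, x, rfl, rfl, h⟩
        exact hadj.reachable.trans ih
  refine ⟨?_, ?_, ?_, ?_, ?_⟩
  · -- connected
    have : Nonempty (Quotient s) := Nonempty.map (Quotient.mk s) hconn.nonempty
    refine SimpleGraph.Connected.mk ?_
    intro b c
    induction b using Quotient.ind with | _ v => ?_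
    induction c using Quotient.ind with | _ w => ?_
    exact hreach (hconn.preconnected v w).some
  · -- locally finite
    intro b
    induction b using Quotient.ind with | _ v => ?_
    exact (((hlf v).image (Quotient.mk s)).subset (hsub v))
  · -- transitive
    intro v w
    obtain ⟨g, hg⟩ := htrans v w
    exact ⟨g, by rw [hg]⟩
  · -- degree bound
    intro v
    calc {c : Quotient s | (quotientGraph Γ s).Adj (Quotient.mk s v) c}.ncard
        ≤ ((Quotient.mk s) '' (Γ.neighborSet v)).ncard :=
          Set.ncard_le_ncard (hsub v) ((hlf v).image _)
      _ ≤ (Γ.neighborSet v).ncard := Set.ncard_image_le (hlf v)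
  · -- stabilizers
    intro v
    set K : Set G := ((MulAction.stabilizer G v : Subgroup G) : Set G) with hK
    set S : Set G := {g : G | Quotient.mk s (g • v) = Quotient.mk s v} with hS
    have hKS : K ⊆ S := by
      intro k hk
      have : k • v = v := hk
      simp only [hS, Set.mem_setOf_eq, this]
    have himg : QuotientGroup.mk (s := H) '' S = QuotientGroup.mk (s := H) '' K := by
      apply Set.Subset.antisymm
      · rintro _ ⟨g, hg, rfl⟩
        obtain ⟨h, hh⟩ := Quotient.exact hg
        have hh' : (h : G) • v = g • v := hh
        refine ⟨(h : G)⁻¹ * g, ?_, ?_⟩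
        · show ((h : G)⁻¹ * g) • v = v
          rw [mul_smul, ← hh', inv_smul_smul]
        · rw [QuotientGroup.eq]
          have : g⁻¹ * (h : G) * g⁻¹⁻¹ ∈ H := ‹H.Normal›.conj_mem _ h.2 g⁻¹
          convert this using 1
          group
      · exact Set.image_mono hKS
    constructor
    · rw [himg]
      exact (hstab v).1.image continuous_quotient_mk'
    · apply QuotientGroup.isOpenMap_coe
      have : S = ⋃ h : H, (h : G) • K := by
        ext g
        simp only [Set.mem_iUnion]
        constructor
        · intro hg
          obtain ⟨h, hh⟩ := Quotient.exact hg
          have hh' : (h : G) • v = g • v := hh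
          refine ⟨h, ?_⟩
          rw [Set.mem_smul_set_iff_inv_smul_mem]
          show ((h : G)⁻¹ * g) • v = v
          rw [mul_smul, ← hh', inv_smul_smul]
        · rintro ⟨h, hg⟩
          rw [Set.mem_smul_set_iff_inv_smul_mem] at hg
          have hg' : ((h : G)⁻¹ * g) • v = v := hg
          have : g • v = (h : G) • v := by
            calc g • v = (h : G) • (((h : G)⁻¹ * g) • v) := by
                  rw [← mul_smul, mul_inv_cancel_left]
              _ = (h : G) • v := by rw [hg']
          simp only [hS, Set.mem_setOf_eq, this, hmk]
      rw [this]
      exact isOpen_iUnion fun h => (hstab v).2.smul _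
end
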